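/- arXiv:1812.02955 — 6 statements merged into one kernel-verified Lean document; each statement's English description precedes it below -/
import Mathlib

section
/- For positive integers n, r, m and integers 1 ≤ s ≤ k−1 (with k ≥ 2), the mixed restricted Stirling numbers of the second kind satisfy the convolution identity S_{≤m}(n,k,r) = Σ_{j=0}^{n} (n choose j) · s! · {n−j brace s}_{≤m} · S_{≤m}(j,k−s,r). -/
/-- The restricted Stirling number of the second kind `{n brace k}_{≤ m}`: the number of
partitions of an `n`-element set into exactly `k` nonempty blocks, each of size at most `m`. -/
noncomputable def stirlingLe (m n k : ℕ) : ℕ :=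
  Nat.card {P : Finpartition (Finset.univ : Finset (Fin n)) //
    P.parts.card = k ∧ ∀ B ∈ P.parts, B.card ≤ m}

/-- The mixed restricted Stirling number of the second kind `S_{≤ m}(n, k, r)`: the number of
pairs `(π, (B_2, …, B_k))` where `B_2, …, B_k` are pairwise disjoint nonempty subsets of
`{1, …, n}` of size at most `m` and `π` is a partition of the complement of their union into
exactly `r` nonempty blocks, each of size at most `m`. -/
noncomputable def mixedStirlingLe (m n k r : ℕ) : ℕ :=
  Nat.card {x : Σ B : Fin (k - 1) → Finset (Fin n),
      Finpartition ((Finset.univ : Finset (Fin n)) \ Finset.univ.biUnion B) //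
    (∀ i, (x.1 i).Nonempty) ∧ (∀ i, (x.1 i).card ≤ m) ∧
    (∀ i j, i ≠ j → Disjoint (x.1 i) (x.1 j)) ∧
    x.2.parts.card = r ∧ ∀ p ∈ x.2.parts, p.card ≤ m}

open Finset

section Aux

variable {α : Type*} {β : Type*} [DecidableEq α] [DecidableEq β]

def IsPart (m r : ℕ) (A : Finset α) (P : Finset (Finset α)) : Prop :=
  P.sup id = A ∧ (↑P : Set (Finset α)).PairwiseDisjoint id ∧ ∅ ∉ P ∧ P.card = r ∧
    ∀ p ∈ P, p.card ≤ m

def IsTup (m : ℕ) {t : ℕ} (C : Fin t → Finset α) : Prop :=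
  (∀ i, (C i).Nonempty) ∧ (∀ i, (C i).card ≤ m) ∧ ∀ i j, i ≠ j → Disjoint (C i) (C j)

def IsMixed (m r : ℕ) {t : ℕ} (A : Finset α)
    (y : (Fin t → Finset α) × Finset (Finset α)) : Prop :=
  (∀ i, y.1 i ⊆ A) ∧ IsTup m y.1 ∧ IsPart m r (A \ Finset.univ.biUnion y.1) y.2

noncomputable def partCount (m r : ℕ) (A : Finset α) : ℕ :=
  Nat.card {P : Finset (Finset α) // IsPart m r A P}

noncomputable def mixedCount (m r t : ℕ) (A : Finset α) : ℕ :=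
  Nat.card {y : (Fin t → Finset α) × Finset (Finset α) // IsMixed m r A y}

lemma natCard_eq_filter {γ : Type*} [Fintype γ] (p : γ → Prop) [DecidablePred p] :
    Nat.card {x // p x} = (Finset.univ.filter p).card := by
  rw [Nat.card_eq_fintype_card, Fintype.card_subtype]

lemma stirlingLe_eq_partCount (m n k : ℕ) :
    stirlingLe m n k = partCount m k (Finset.univ : Finset (Fin n)) := by
  refine Nat.card_congr
    ⟨fun x => ⟨x.1.parts, x.1.sup_parts,
        Finset.supIndep_iff_pairwiseDisjoint.mp x.1.supIndep,
        by simpa using x.1.not_bot_mem, x.2.1, x.2.2⟩,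
     fun y => ⟨⟨y.1, Finset.supIndep_iff_pairwiseDisjoint.mpr y.2.2.1, y.2.1,
        by simpa using y.2.2.2.1⟩, y.2.2.2.2.1, y.2.2.2.2.2⟩,
     fun x => ?_, fun y => rfl⟩
  exact Subtype.ext (Finpartition.ext rfl)

lemma mixedStirlingLe_eq_mixedCount (m n k r : ℕ) :
    mixedStirlingLe m n k r = mixedCount m r (k - 1) (Finset.univ : Finset (Fin n)) := by
  refine Nat.card_congr
    ⟨fun x => ⟨(x.1.1, x.1.2.parts), fun i => Finset.subset_univ _,
        ⟨x.2.1, x.2.2.1, x.2.2.2.1⟩,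
        x.1.2.sup_parts, Finset.supIndep_iff_pairwiseDisjoint.mp x.1.2.supIndep,
        by simpa using x.1.2.not_bot_mem, x.2.2.2.2.1, x.2.2.2.2.2⟩,
     fun y => ⟨⟨y.1.1, ⟨y.1.2,
        Finset.supIndep_iff_pairwiseDisjoint.mpr y.2.2.2.2.1, y.2.2.2.1,
        by simpa using y.2.2.2.2.2.1⟩⟩,
        y.2.2.1.1, y.2.2.1.2.1, y.2.2.1.2.2, y.2.2.2.2.2.2.1, y.2.2.2.2.2.2.2⟩,
     fun x => ?_, fun y => rfl⟩
  exact Subtype.ext (congrArg (Sigma.mk _) (Finpartition.ext rfl))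

end Aux

section Relabel

variable {α : Type*} {β : Type*} [DecidableEq α] [DecidableEq β] (f : β ↪ α)

lemma sup_map_blocks (P : Finset (Finset β)) :
    P.sup (fun b => b.map f) = (P.sup id).map f := by
  classical
  induction P using Finset.induction with
  | empty => simp
  | insert _ _ h ih => simp [Finset.sup_insert, ih, Finset.map_union]

lemma isPart_map_iff (m r : ℕ) (S : Finset β) (P : Finset (Finset β)) :
    IsPart m r (S.map f) (P.image (fun b => b.map f)) ↔ IsPart m r S P := by
  classical
  have hinj : Function.Injective (fun b : Finset β => b.map f) := Finset.map_injective f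
  unfold IsPart
  refine and_congr ?_ (and_congr ?_ (and_congr ?_ (and_congr ?_ ?_)))
  · rw [Finset.sup_image]
    have : (id ∘ fun b : Finset β => b.map f) = fun b : Finset β => b.map f := rfl
    rw [this, sup_map_blocks]
    exact ⟨fun h => Finset.map_injective f h, fun h => by rw [h]⟩
  · constructor
    · intro h a ha b hb hab
      have := h (Finset.mem_coe.mpr (Finset.mem_image_of_mem _ ha))
        (Finset.mem_coe.mpr (Finset.mem_image_of_mem _ hb)) (fun hh => hab (hinj hh))
      simpa [Function.onFun, Finset.disjoint_map] using this
    · intro h a ha b hb hab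
      simp only [Finset.mem_coe, Finset.mem_image] at ha hb
      obtain ⟨a', ha', rfl⟩ := ha
      obtain ⟨b', hb', rfl⟩ := hb
      have hne : a' ≠ b' := fun hh => hab (by rw [hh])
      have := h (Finset.mem_coe.mpr ha') (Finset.mem_coe.mpr hb') hne
      simpa [Function.onFun, Finset.disjoint_map] using this
  · simp [Finset.mem_image, Finset.map_eq_empty]
  · rw [Finset.card_image_of_injective _ hinj]
  · constructor
    · intro h p hp
      have := h (p.map f) (Finset.mem_image_of_mem _ hp)
      simpa using this
    · intro h p hp
      obtain ⟨q, hq, rfl⟩ := Finset.mem_image.mp hp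
      simpa using h q hq

lemma map_preimage_of_subset (S : Finset β) (q : Finset α) (h : q ⊆ S.map f) :
    (q.preimage f f.injective.injOn).map f = q := by
  classical
  rw [Finset.map_eq_image, Finset.image_preimage]
  refine Finset.filter_true_of_mem (fun x hx => ?_)
  obtain ⟨y, _, rfl⟩ := Finset.mem_map.mp (h hx)
  exact ⟨y, rfl⟩

lemma partCount_map (m r : ℕ) (S : Finset β) :
    partCount m r (S.map f) = partCount m r S := by
  classical
  refine (Nat.card_eq_of_bijective
    (fun P : {P : Finset (Finset β) // IsPart m r S P} =>
      (⟨P.1.image (fun b => b.map f), (isPart_map_iff f m r S P.1).mpr P.2⟩ :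
        {Q : Finset (Finset α) // IsPart m r (S.map f) Q}))
    ⟨fun P Q h => Subtype.ext (Finset.image_injective (Finset.map_injective f)
        (congrArg Subtype.val h)), ?_⟩).symm
  rintro ⟨Q, hQ⟩
  have hsub : ∀ q ∈ Q, q ⊆ S.map f := by
    intro q hq
    have := Finset.le_sup (f := id) hq
    rw [hQ.1] at this
    exact this
  have hPQ : (Q.image (fun q => q.preimage f f.injective.injOn)).image (fun b => b.map f) = Q := by
    rw [Finset.image_image]
    have : ((fun b : Finset β => b.map f) ∘ fun q : Finset α => q.preimage f f.injective.injOn)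
        = fun q : Finset α => (q.preimage f f.injective.injOn).map f := rfl
    rw [this]
    refine Finset.image_congr (fun q hq => map_preimage_of_subset f S q (hsub q hq)) |>.trans
      Finset.image_id
  exact ⟨⟨Q.image (fun q => q.preimage f f.injective.injOn),
    (isPart_map_iff f m r S _).mp (by rw [hPQ]; exact hQ)⟩, Subtype.ext hPQ⟩

end Relabel

section Relabel2

variable {α : Type*} {β : Type*} [DecidableEq α] [DecidableEq β] (f : β ↪ α)

lemma biUnion_map_comm {t : ℕ} (C : Fin t → Finset β) :
    (Finset.univ.biUnion fun i => (C i).map f) = (Finset.univ.biUnion C).map f := by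
  classical
  ext x
  simp only [Finset.mem_biUnion, Finset.mem_map, Finset.mem_univ, true_and]
  constructor
  · rintro ⟨i, y, hy, rfl⟩; exact ⟨y, ⟨i, hy⟩, rfl⟩
  · rintro ⟨y, ⟨i, hy⟩, rfl⟩; exact ⟨i, y, hy, rfl⟩

lemma sdiff_map_comm (s t : Finset β) : (s \ t).map f = s.map f \ t.map f := by
  classical
  ext x
  simp only [Finset.mem_map, Finset.mem_sdiff]
  constructor
  · rintro ⟨y, ⟨hy1, hy2⟩, rfl⟩
    exact ⟨⟨y, hy1, rfl⟩, fun ⟨z, hz, hzx⟩ => hy2 (f.injective hzx ▸ hz)⟩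
  · rintro ⟨⟨y, hy, rfl⟩, hx⟩
    exact ⟨y, ⟨hy, fun hyt => hx ⟨y, hyt, rfl⟩⟩, rfl⟩

lemma isMixed_map_iff (m r : ℕ) {t : ℕ} (S : Finset β)
    (y : (Fin t → Finset β) × Finset (Finset β)) :
    IsMixed m r (S.map f) ((fun i => (y.1 i).map f), y.2.image (fun b => b.map f)) ↔
      IsMixed m r S y := by
  classical
  unfold IsMixed IsTup
  have hground : S.map f \ Finset.univ.biUnion (fun i => (y.1 i).map f)
      = (S \ Finset.univ.biUnion y.1).map f := by
    rw [biUnion_map_comm, sdiff_map_comm]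
  rw [hground]
  refine and_congr ?_ (and_congr (and_congr ?_ (and_congr ?_ ?_)) ?_)
  · exact forall_congr' fun i => Finset.map_subset_map
  · exact forall_congr' fun i => Finset.map_nonempty
  · simp
  · refine forall_congr' fun i => forall_congr' fun j => imp_congr Iff.rfl ?_
    exact Finset.disjoint_map f
  · exact isPart_map_iff f m r _ y.2

lemma mixedCount_map (m r t : ℕ) (S : Finset β) :
    mixedCount m r t (S.map f) = mixedCount m r t S := by
  classical
  refine (Nat.card_eq_of_bijective
    (fun y : {y : (Fin t → Finset β) × Finset (Finset β) // IsMixed m r S y} =>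
      (⟨((fun i => (y.1.1 i).map f), y.1.2.image (fun b => b.map f)),
        (isMixed_map_iff f m r S y.1).mpr y.2⟩ :
        {z : (Fin t → Finset α) × Finset (Finset α) // IsMixed m r (S.map f) z}))
    ⟨?_, ?_⟩).symm
  · rintro ⟨⟨C, P⟩, h⟩ ⟨⟨C', P'⟩, h'⟩ hh
    have h1 := congrArg (fun z => z.val.1) hh
    have h2 := congrArg (fun z => z.val.2) hh
    simp only at h1 h2
    refine Subtype.ext (Prod.ext ?_ ?_)
    · exact funext fun i => Finset.map_injective f (congrFun h1 i)
    · exact Finset.image_injective (Finset.map_injective f) h2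
  · rintro ⟨⟨D, Q⟩, hDQ⟩
    have hDsub : ∀ i, D i ⊆ S.map f := hDQ.1
    have hQsub : ∀ q ∈ Q, q ⊆ S.map f := by
      intro q hq
      have h1 := Finset.le_sup (f := id) hq
      rw [hDQ.2.2.1] at h1
      exact h1.trans (Finset.sdiff_subset)
    set C : Fin t → Finset β := fun i => (D i).preimage f f.injective.injOn with hC
    set P : Finset (Finset β) := Q.image (fun q => q.preimage f f.injective.injOn) with hP
    have hCD : (fun i => (C i).map f) = D :=
      funext fun i => map_preimage_of_subset f S (D i) (hDsub i)
    have hPQ : P.image (fun b => b.map f) = Q := by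
      rw [hP, Finset.image_image]
      have heq : ((fun b : Finset β => b.map f) ∘ fun q : Finset α => q.preimage f f.injective.injOn)
          = fun q : Finset α => (q.preimage f f.injective.injOn).map f := rfl
      rw [heq]
      refine Finset.image_congr (fun q hq => map_preimage_of_subset f S q (hQsub q hq)) |>.trans
        Finset.image_id
    refine ⟨⟨(C, P), (isMixed_map_iff f m r S (C, P)).mp ?_⟩, Subtype.ext (Prod.ext hCD hPQ)⟩
    rw [show ((fun i => (C i).map f), P.image (fun b => b.map f)) = ((D, Q) :
      (Fin t → Finset α) × Finset (Finset α)) from Prod.ext hCD hPQ]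
    exact hDQ

end Relabel2

section CountEq

variable {α : Type*} [DecidableEq α] [Fintype α]

lemma exists_emb (A : Finset α) : ∃ f : Fin A.card ↪ α, (Finset.univ : Finset (Fin A.card)).map f = A := by
  classical
  refine ⟨⟨fun i => (A.equivFin.symm i : α), fun i j h => A.equivFin.symm.injective (Subtype.ext h)⟩, ?_⟩
  ext x
  simp only [Finset.mem_map, Finset.mem_univ, true_and, Function.Embedding.coeFn_mk]
  constructor
  · rintro ⟨i, rfl⟩; exact (A.equivFin.symm i).2
  · intro hx; exact ⟨A.equivFin ⟨x, hx⟩, by exact congrArg Subtype.val (A.equivFin.symm_apply_apply ⟨x, hx⟩)⟩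

lemma partCount_eq_stirlingLe (m r : ℕ) (A : Finset α) :
    partCount m r A = stirlingLe m A.card r := by
  obtain ⟨f, hf⟩ := exists_emb A
  rw [stirlingLe_eq_partCount, ← partCount_map f, hf]

lemma mixedCount_eq_mixedStirlingLe (m r t : ℕ) (A : Finset α) :
    mixedCount m r t A = mixedStirlingLe m A.card (t + 1) r := by
  obtain ⟨f, hf⟩ := exists_emb A
  rw [mixedStirlingLe_eq_mixedCount, Nat.add_sub_cancel, ← mixedCount_map f, hf]

end CountEq

section Tup

variable {α : Type*} [DecidableEq α] [Fintype α]

lemma tup_injective {m sN : ℕ} {C : Fin sN → Finset α} (hC : IsTup m C) :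
    Function.Injective C := by
  intro i j h
  by_contra hij
  have hd := hC.2.2 i j hij
  rw [h] at hd
  exact (hC.1 j).ne_empty (by simpa using disjoint_self.mp hd)

lemma image_isPart {m sN : ℕ} {C : Fin sN → Finset α} {A : Finset α}
    (hC : IsTup m C) (hU : Finset.univ.biUnion C = A) :
    IsPart m sN A (Finset.univ.image C) := by
  classical
  refine ⟨?_, ?_, ?_, ?_, ?_⟩
  · rw [Finset.sup_image, show (id ∘ C) = C from rfl, Finset.sup_eq_biUnion]
    exact hU
  · intro a ha b hb hab
    obtain ⟨i, _, rfl⟩ := Finset.mem_image.mp (Finset.mem_coe.mp ha)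
    obtain ⟨j, _, rfl⟩ := Finset.mem_image.mp (Finset.mem_coe.mp hb)
    exact hC.2.2 i j (fun h => hab (by rw [h]))
  · intro h
    obtain ⟨i, _, hi⟩ := Finset.mem_image.mp h
    exact (hC.1 i).ne_empty hi
  · rw [Finset.card_image_of_injective _ (tup_injective hC), Finset.card_univ, Fintype.card_fin]
  · intro p hp
    obtain ⟨i, _, rfl⟩ := Finset.mem_image.mp hp
    exact hC.2.1 i

lemma tup_fiber_card {m sN : ℕ} {A : Finset α} {P : Finset (Finset α)} (hP : IsPart m sN A P) :
    Nat.card {C : Fin sN → Finset α //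
      (IsTup m C ∧ Finset.univ.biUnion C = A) ∧ Finset.univ.image C = P} = sN.factorial := by
  classical
  have e : {C : Fin sN → Finset α //
      (IsTup m C ∧ Finset.univ.biUnion C = A) ∧ Finset.univ.image C = P} ≃
      (Fin sN ≃ {b // b ∈ P}) := by
    refine ⟨fun C => Equiv.ofBijective
      (fun i => (⟨C.1 i, by have h0 := Finset.mem_image_of_mem C.1 (Finset.mem_univ i); rwa [C.2.2] at h0⟩ :
        {b // b ∈ P})) ⟨?_, ?_⟩, fun e => ⟨fun i => ((e i : {b // b ∈ P}) : Finset α), ?_⟩, ?_, ?_⟩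
    · intro i j h
      exact tup_injective C.2.1.1 (congrArg Subtype.val h)
    · rintro ⟨b, hb⟩
      rw [← C.2.2] at hb
      obtain ⟨i, _, rfl⟩ := Finset.mem_image.mp hb
      exact ⟨i, rfl⟩
    · have himg : Finset.univ.image (fun i => ((e i : {b // b ∈ P}) : Finset α)) = P := by
        ext b
        simp only [Finset.mem_image, Finset.mem_univ, true_and]
        constructor
        · rintro ⟨i, rfl⟩; exact (e i).2
        · intro hb; exact ⟨e.symm ⟨b, hb⟩, by simp⟩
      refine ⟨⟨⟨fun i => ?_, fun i => ?_, fun i j hij => ?_⟩, ?_⟩, himg⟩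
      · exact Finset.nonempty_iff_ne_empty.mpr (fun h => hP.2.2.1 (h ▸ (e i).2))
      · exact hP.2.2.2.2 _ (e i).2
      · exact hP.2.1 (Finset.mem_coe.mpr (e i).2) (Finset.mem_coe.mpr (e j).2)
          (fun h => hij (e.injective (Subtype.ext h)))
      · have h2 : Finset.univ.sup (fun i => ((e i : {b // b ∈ P}) : Finset α)) = P.sup id := by
          conv_rhs => rw [← himg]
          rw [Finset.sup_image]
          rfl
        rw [← Finset.sup_eq_biUnion, h2, hP.1]
    · intro C
      exact Subtype.ext (funext fun i => rfl)
    · intro e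
      exact Equiv.ext fun i => Subtype.ext rfl
  rw [Nat.card_congr e, Nat.card_eq_fintype_card]
  have hcard : Fintype.card {b // b ∈ P} = sN := by rw [Fintype.card_coe, hP.2.2.2.1]
  rw [Fintype.card_equiv (Fintype.equivOfCardEq (by simp [hcard]))]
  simp

lemma tupCount_eq (m sN : ℕ) (A : Finset α) :
    Nat.card {C : Fin sN → Finset α // IsTup m C ∧ Finset.univ.biUnion C = A}
      = sN.factorial * partCount m sN A := by
  classical
  rw [natCard_eq_filter]
  rw [Finset.card_eq_sum_card_fiberwise (f := fun C : Fin sN → Finset α => Finset.univ.image C)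
    (t := Finset.univ.filter (IsPart m sN A)) (fun C hC => by
      simp only [Finset.mem_coe, Finset.mem_filter, Finset.mem_univ, true_and] at hC ⊢
      exact image_isPart hC.1 hC.2)]
  have hconst : ∀ P ∈ Finset.univ.filter (IsPart m sN A),
      (((Finset.univ.filter (fun C : Fin sN → Finset α =>
          IsTup m C ∧ Finset.univ.biUnion C = A)).filter
        (fun C => Finset.univ.image C = P))).card = sN.factorial := by
    intro P hP
    rw [Finset.filter_filter, ← natCard_eq_filter]
    exact tup_fiber_card (Finset.mem_filter.mp hP).2
  rw [Finset.sum_congr rfl hconst, Finset.sum_const, smul_eq_mul, mul_comm]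
  congr 1
  rw [partCount, natCard_eq_filter]

end Tup

section Split

variable {α : Type*} [DecidableEq α] [Fintype α]

lemma biUnion_addCases {sN uN : ℕ} (C : Fin (sN + uN) → Finset α)
    (C₁ : Fin sN → Finset α) (C₂ : Fin uN → Finset α)
    (hl : ∀ i, C (Fin.castAdd uN i) = C₁ i) (hr : ∀ j, C (Fin.natAdd sN j) = C₂ j) :
    Finset.univ.biUnion C = Finset.univ.biUnion C₁ ∪ Finset.univ.biUnion C₂ := by
  ext x
  simp only [Finset.mem_biUnion, Finset.mem_union, Finset.mem_univ, true_and]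
  constructor
  · rintro ⟨i, hi⟩
    refine Fin.addCases (motive := fun a => x ∈ C a → (∃ i, x ∈ C₁ i) ∨ ∃ j, x ∈ C₂ j)
      (fun i hi => Or.inl ⟨i, hl i ▸ hi⟩) (fun j hj => Or.inr ⟨j, hr j ▸ hj⟩) i hi
  · rintro (⟨i, hi⟩ | ⟨j, hj⟩)
    · exact ⟨Fin.castAdd uN i, (hl i).symm ▸ hi⟩
    · exact ⟨Fin.natAdd sN j, (hr j).symm ▸ hj⟩

lemma ground_split {sN uN : ℕ} (C : Fin (sN + uN) → Finset α)
    (C₁ : Fin sN → Finset α) (C₂ : Fin uN → Finset α)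
    (hl : ∀ i, C (Fin.castAdd uN i) = C₁ i) (hr : ∀ j, C (Fin.natAdd sN j) = C₂ j) :
    (Finset.univ \ Finset.univ.biUnion C₁) \ Finset.univ.biUnion C₂
      = (Finset.univ : Finset α) \ Finset.univ.biUnion C := by
  rw [biUnion_addCases C C₁ C₂ hl hr]
  ext x
  simp only [Finset.mem_sdiff, Finset.mem_union, Finset.mem_univ, true_and]
  tauto

lemma split_forward {m r sN uN : ℕ} {U : Finset α}
    {y : (Fin (sN + uN) → Finset α) × Finset (Finset α)}
    (h : IsMixed m r (Finset.univ : Finset α) y)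
    (hF : Finset.univ.biUnion (fun i : Fin sN => y.1 (Fin.castAdd uN i)) = U) :
    (IsTup m (fun i : Fin sN => y.1 (Fin.castAdd uN i)) ∧
      Finset.univ.biUnion (fun i : Fin sN => y.1 (Fin.castAdd uN i)) = U) ∧
    IsMixed m r (Finset.univ \ U) ((fun j : Fin uN => y.1 (Fin.natAdd sN j)), y.2) := by
  obtain ⟨hsub, ⟨hne, hcard, hdisj⟩, hpart⟩ := h
  have hcast_ne : ∀ (i j : Fin sN), i ≠ j → Fin.castAdd uN i ≠ Fin.castAdd uN j := by
    intro i j hij h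
    exact hij (by simpa [Fin.ext_iff] using h)
  have hnat_ne : ∀ (i j : Fin uN), i ≠ j → Fin.natAdd sN i ≠ Fin.natAdd sN j := by
    intro i j hij h
    exact hij (by simpa [Fin.ext_iff] using h)
  have hmix : ∀ (i : Fin sN) (j : Fin uN), Fin.castAdd uN i ≠ Fin.natAdd sN j := by
    intro i j h
    have h2 := congrArg Fin.val h
    simp only [Fin.coe_castAdd, Fin.coe_natAdd] at h2
    omega
  refine ⟨⟨⟨fun i => hne _, fun i => hcard _, fun i j hij => hdisj _ _ (hcast_ne i j hij)⟩, hF⟩,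
    ?_, ⟨fun j => hne _, fun j => hcard _, fun i j hij => hdisj _ _ (hnat_ne i j hij)⟩, ?_⟩
  · intro j x hx
    rw [Finset.mem_sdiff]
    refine ⟨Finset.mem_univ x, fun hxU => ?_⟩
    rw [← hF] at hxU
    simp only [Finset.mem_biUnion, Finset.mem_univ, true_and] at hxU
    obtain ⟨i, hxi⟩ := hxU
    exact (Finset.disjoint_left.mp (hdisj _ _ (hmix i j)) hxi) hx
  · have hg := ground_split y.1 (fun i : Fin sN => y.1 (Fin.castAdd uN i))
      (fun j : Fin uN => y.1 (Fin.natAdd sN j)) (fun i => rfl) (fun j => rfl)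
    rw [← hF]
    rw [hg]
    exact hpart

lemma split_backward {m r sN uN : ℕ} {U : Finset α}
    {C₁ : Fin sN → Finset α} {C₂ : Fin uN → Finset α} {P : Finset (Finset α)}
    (D : Fin (sN + uN) → Finset α)
    (hl : ∀ i, D (Fin.castAdd uN i) = C₁ i) (hr : ∀ j, D (Fin.natAdd sN j) = C₂ j)
    (h1 : IsTup m C₁ ∧ Finset.univ.biUnion C₁ = U)
    (h2 : IsMixed m r (Finset.univ \ U) (C₂, P)) :
    IsMixed m r (Finset.univ : Finset α) (D, P) ∧
      Finset.univ.biUnion (fun i : Fin sN => D (Fin.castAdd uN i)) = U := by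
  obtain ⟨⟨hne1, hcard1, hdisj1⟩, hU⟩ := h1
  obtain ⟨hsub2, ⟨hne2, hcard2, hdisj2⟩, hpart2⟩ := h2
  have hcross : ∀ (i : Fin sN) (j : Fin uN), Disjoint (C₁ i) (C₂ j) := by
    intro i j
    have hC1 : C₁ i ⊆ U := hU ▸ Finset.subset_biUnion_of_mem C₁ (Finset.mem_univ i)
    have hC2 : C₂ j ⊆ Finset.univ \ U := hsub2 j
    exact Finset.disjoint_of_subset_left hC1
      (Finset.disjoint_of_subset_right hC2 Finset.disjoint_sdiff)
  constructor
  · refine ⟨fun i => Finset.subset_univ _, ⟨?_, ?_, ?_⟩, ?_⟩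
    · intro a
      refine Fin.addCases (motive := fun a => (D a).Nonempty) (fun i => ?_) (fun j => ?_) a
      · simpa only [hl i] using hne1 i
      · simpa only [hr j] using hne2 j
    · intro a
      refine Fin.addCases (motive := fun a => (D a).card ≤ m) (fun i => ?_) (fun j => ?_) a
      · simpa only [hl i] using hcard1 i
      · simpa only [hr j] using hcard2 j
    · intro a b
      refine Fin.addCases (motive := fun a => a ≠ b → Disjoint (D a) (D b)) ?_ ?_ a <;>
        intro i <;>
        refine Fin.addCases (motive := fun b => _ ≠ b → Disjoint (D _) (D b)) ?_ ?_ b <;>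
        intro j hab
      · simp only [hl]
        exact hdisj1 i j (fun h => hab (by rw [h]))
      · simp only [hl, hr]
        exact hcross i j
      · simp only [hl, hr]
        exact (hcross j i).symm
      · simp only [hr]
        exact hdisj2 i j (fun h => hab (by rw [h]))
    · have hg := ground_split D C₁ C₂ hl hr
      rw [← hg, hU]
      exact hpart2
  · have : (fun i : Fin sN => D (Fin.castAdd uN i)) = C₁ := funext hl
    rw [this, hU]

lemma split_fiber (m r sN uN : ℕ) (U : Finset α) :
    Nat.card {y : (Fin (sN + uN) → Finset α) × Finset (Finset α) //
        IsMixed m r (Finset.univ : Finset α) y ∧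
        Finset.univ.biUnion (fun i : Fin sN => y.1 (Fin.castAdd uN i)) = U} =
      (sN.factorial * partCount m sN U) * mixedCount m r uN (Finset.univ \ U) := by
  classical
  have e : {y : (Fin (sN + uN) → Finset α) × Finset (Finset α) //
        IsMixed m r (Finset.univ : Finset α) y ∧
        Finset.univ.biUnion (fun i : Fin sN => y.1 (Fin.castAdd uN i)) = U} ≃
      ({C : Fin sN → Finset α // IsTup m C ∧ Finset.univ.biUnion C = U} ×
        {z : (Fin uN → Finset α) × Finset (Finset α) //
          IsMixed m r (Finset.univ \ U) z}) := by
    refine ⟨fun y => (⟨fun i => y.1.1 (Fin.castAdd uN i), (split_forward y.2.1 y.2.2).1⟩,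
        ⟨((fun j => y.1.1 (Fin.natAdd sN j)), y.1.2), (split_forward y.2.1 y.2.2).2⟩),
      fun p => ⟨((fun a => Fin.addCases (motive := fun _ => Finset α) p.1.1 p.2.1.1 a), p.2.1.2),
        split_backward _ (fun i => by simp) (fun j => by simp) p.1.2 p.2.2⟩, ?_, ?_⟩
    · intro y
      refine Subtype.ext (Prod.ext (funext fun a => ?_) rfl)
      refine Fin.addCases (motive := fun a =>
        Fin.addCases (motive := fun _ => Finset α) _ _ a = y.1.1 a) (fun i => ?_) (fun j => ?_) a
      · simp
      · simp
    · intro p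
      refine Prod.ext (Subtype.ext (funext fun i => by simp))
        (Subtype.ext (Prod.ext (funext fun j => by simp) rfl))
  rw [Nat.card_congr e, Nat.card_prod, tupCount_eq]
  rfl

lemma mixedCount_split (m r sN uN : ℕ) :
    mixedCount m r (sN + uN) (Finset.univ : Finset α) =
      ∑ U ∈ (Finset.univ : Finset α).powerset,
        (sN.factorial * partCount m sN U) * mixedCount m r uN (Finset.univ \ U) := by
  classical
  rw [mixedCount, natCard_eq_filter]
  rw [Finset.card_eq_sum_card_fiberwise
    (f := fun y : (Fin (sN + uN) → Finset α) × Finset (Finset α) =>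
      Finset.univ.biUnion (fun i : Fin sN => y.1 (Fin.castAdd uN i)))
    (t := (Finset.univ : Finset α).powerset)
    (fun y _ => Finset.mem_powerset.mpr (Finset.subset_univ _))]
  refine Finset.sum_congr rfl fun U hU => ?_
  rw [Finset.filter_filter, ← natCard_eq_filter]
  exact split_fiber m r sN uN U

end Split

theorem mixedStirlingLe_convolution' (n r m k s : ℕ)
    (hn : 1 ≤ n) (hr : 1 ≤ r) (hm : 1 ≤ m) (hk : 2 ≤ k) (hs : 1 ≤ s) (hsk : s ≤ k - 1) :
    mixedStirlingLe m n k r =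
      ∑ j ∈ Finset.range (n + 1),
        n.choose j * s.factorial * stirlingLe m (n - j) s *
          mixedStirlingLe m j (k - s) r := by
  classical
  set u := k - 1 - s with hu
  have h1 : k - 1 = s + u := by omega
  have h2 : u + 1 = k - s := by omega
  rw [mixedStirlingLe_eq_mixedCount, h1, mixedCount_split]
  have hval : ∀ U ∈ (Finset.univ : Finset (Fin n)).powerset,
      (s.factorial * partCount m s U) * mixedCount m r u (Finset.univ \ U)
        = s.factorial * stirlingLe m U.card s *
            mixedStirlingLe m (n - U.card) (k - s) r := by
    intro U hU
    have hc : (Finset.univ \ U).card = n - U.card := by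
      rw [Finset.card_sdiff_of_subset (Finset.mem_powerset.mp hU), Finset.card_univ, Fintype.card_fin]
    rw [partCount_eq_stirlingLe, mixedCount_eq_mixedStirlingLe, hc, h2]
  rw [Finset.sum_congr rfl hval, Finset.sum_powerset]
  have hcardu : ((Finset.univ : Finset (Fin n)).card) = n := by
    rw [Finset.card_univ, Fintype.card_fin]
  rw [hcardu]
  have hinner : ∀ c ∈ Finset.range (n + 1),
      (∑ U ∈ Finset.powersetCard c (Finset.univ : Finset (Fin n)),
        s.factorial * stirlingLe m U.card s * mixedStirlingLe m (n - U.card) (k - s) r)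
      = n.choose c * (s.factorial * stirlingLe m c s *
          mixedStirlingLe m (n - c) (k - s) r) := by
    intro c hc
    rw [Finset.sum_congr rfl (fun U hU => by
      rw [(Finset.mem_powersetCard.mp hU).2]),
      Finset.sum_const, smul_eq_mul, Finset.card_powersetCard, hcardu]
  rw [Finset.sum_congr rfl hinner, ← Finset.sum_range_reflect]
  refine Finset.sum_congr rfl fun j hj => ?_
  have hjn : j ≤ n := by
    have := Finset.mem_range.mp hj
    omega
  rw [show n + 1 - 1 - j = n - j from by omega, Nat.choose_symm hjn,
    show n - (n - j) = j from by omega]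
  ring
end

section
/- For positive integers n, k, m and r, the mixed restricted Stirling numbers of the second kind satisfy r · S_{≤m}(n,k,r) = Σ_{j=1}^{m} (n choose j) · S_{≤m}(n−j,k,r−1), where the binomial coefficient (n choose j) is 0 for j > n and terms whose first argument n−j is negative are taken to be 0 (terms with j > n−k−r+2 vanish automatically). -/
open Finset

variable {α β : Type*} [DecidableEq α] [DecidableEq β]

instance finpartitionFinite [Finite α] (t : Finset α) : Finite (Finpartition t) := by
  haveI := Fintype.ofFinite α
  exact Finite.of_injective (fun P => P.parts) (fun P Q h => Finpartition.ext h)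

/-- Image of a finpartition under a function injective on the ground set. -/
def fpImage (G : α → β) {t : Finset α} (hG : Set.InjOn G t) (P : Finpartition t) :
    Finpartition (t.image G) where
  parts := P.parts.image (Finset.image G)
  supIndep := by
    rw [Finset.supIndep_iff_pairwiseDisjoint]
    rintro p hp q hq hpq
    simp only [Finset.coe_image, Set.mem_image, Finset.mem_coe] at hp hq
    obtain ⟨p', hp', rfl⟩ := hp
    obtain ⟨q', hq', rfl⟩ := hq
    have hne : p' ≠ q' := by rintro rfl; exact hpq rfl
    have hd := P.disjoint hp' hq' hne
    simp only [Function.onFun, id_eq] at hd ⊢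
    rw [Finset.disjoint_left] at hd ⊢
    rintro b hb hb'
    simp only [Finset.mem_image] at hb hb'
    obtain ⟨a, ha, rfl⟩ := hb
    obtain ⟨a', ha', haa⟩ := hb'
    have : a' = a := hG (P.le hq' ha') (P.le hp' ha) haa
    exact hd ha (this ▸ ha')
  sup_parts := by
    rw [Finset.sup_image]
    have : ∀ u : Finset (Finset α), u.sup (id ∘ Finset.image G) = (u.sup id).image G := by
      intro u
      induction u using Finset.induction_on with
      | empty => simp
      | insert _ _ h ih =>
        rw [Finset.sup_insert, Finset.sup_insert, ih]
        simp [sup_eq_union, Finset.image_union]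
    rw [this P.parts, P.sup_parts]
  bot_notMem := by
    simp only [Finset.bot_eq_empty, Finset.mem_image]
    rintro ⟨p, hp, h⟩
    rw [Finset.image_eq_empty] at h
    exact P.bot_notMem (by rw [Finset.bot_eq_empty, ← h]; exact hp)

@[simp] lemma fpImage_parts (G : α → β) {t : Finset α} (hG : Set.InjOn G t) (P : Finpartition t) :
    (fpImage G hG P).parts = P.parts.image (Finset.image G) := rfl

/-- Removing one part from a finpartition. -/
def fpErase {t : Finset α} (P : Finpartition t) (p : Finset α) (hp : p ∈ P.parts) :
    Finpartition (t \ p) where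
  parts := P.parts.erase p
  supIndep := P.supIndep.subset (Finset.erase_subset _ _)
  sup_parts := by
    have h1 : (insert p (P.parts.erase p)).sup id = t := by
      rw [Finset.insert_erase hp, P.sup_parts]
    rw [Finset.sup_insert, id_eq] at h1
    have h2 : Disjoint p ((P.parts.erase p).sup id) :=
      P.supIndep (Finset.erase_subset _ _) hp (Finset.notMem_erase _ _)
    have h3 := Finset.union_sdiff_cancel_left h2
    rw [← sup_eq_union, h1] at h3
    exact h3.symm
  bot_notMem := fun h => P.bot_notMem (Finset.erase_subset _ _ h)

@[simp] lemma fpErase_parts {t : Finset α} (P : Finpartition t) (p : Finset α) (hp : p ∈ P.parts) :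
    (fpErase P p hp).parts = P.parts.erase p := rfl

variable {α β : Type*} [DecidableEq α] [DecidableEq β]

section helpers
variable {G : α → β} {H : β → α} {s p q : Finset α}

lemma image_disjoint_of_injOn (hG : Set.InjOn G s) (hp : p ⊆ s) (hq : q ⊆ s)
    (h : Disjoint p q) : Disjoint (p.image G) (q.image G) := by
  rw [Finset.disjoint_left] at h ⊢
  rintro b hb hb'
  simp only [Finset.mem_image] at hb hb'
  obtain ⟨a, ha, rfl⟩ := hb
  obtain ⟨a', ha', haa⟩ := hb'
  exact h ha ((hG (hq ha') (hp ha) haa) ▸ ha')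

lemma image_sdiff_of_injOn (hG : Set.InjOn G s) (hp : p ⊆ s) (hq : q ⊆ s) :
    (p \ q).image G = p.image G \ q.image G := by
  ext b
  simp only [Finset.mem_image, Finset.mem_sdiff]
  constructor
  · rintro ⟨a, ⟨hap, haq⟩, rfl⟩
    refine ⟨⟨a, hap, rfl⟩, ?_⟩
    rintro ⟨a', ha', haa⟩
    exact haq ((hG (hq ha') (hp hap) haa) ▸ ha')
  · rintro ⟨⟨a, hap, rfl⟩, hb⟩
    exact ⟨a, ⟨hap, fun haq => hb ⟨a, haq, rfl⟩⟩, rfl⟩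

lemma image_cancel (hHG : ∀ a ∈ s, H (G a) = a) (hp : p ⊆ s) :
    (p.image G).image H = p := by
  rw [Finset.image_image]
  calc p.image (H ∘ G) = p.image id := Finset.image_congr (fun a ha => hHG a (hp ha))
  _ = p := Finset.image_id

lemma image_left_cancel (hG : Set.InjOn G s) (hp : p ⊆ s) (hq : q ⊆ s)
    (h : p.image G = q.image G) : p = q := by
  ext a
  constructor
  · intro hap
    have : G a ∈ q.image G := h ▸ Finset.mem_image_of_mem G hap
    obtain ⟨a', ha', haa⟩ := Finset.mem_image.1 this
    exact (hG (hq ha') (hp hap) haa) ▸ ha'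
  · intro haq
    have : G a ∈ p.image G := h.symm ▸ Finset.mem_image_of_mem G haq
    obtain ⟨a', ha', haa⟩ := Finset.mem_image.1 this
    exact (hG (hp ha') (hq haq) haa) ▸ ha'

end helpers

/-- Generalized mixed-restricted-Stirling structures on a ground finset `s`. -/
def StructOn (m k r : ℕ) {α : Type*} [DecidableEq α] (s : Finset α) : Type _ :=
  {x : Σ B : Fin (k - 1) → Finset α, Finpartition (s \ Finset.univ.biUnion B) //
    (∀ i, (x.1 i).Nonempty) ∧ (∀ i, (x.1 i).card ≤ m) ∧ (∀ i, x.1 i ⊆ s) ∧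
    (∀ i j, i ≠ j → Disjoint (x.1 i) (x.1 j)) ∧
    x.2.parts.card = r ∧ ∀ p ∈ x.2.parts, p.card ≤ m}

lemma struct_ext {m k r : ℕ} {s : Finset α} (x y : StructOn m k r s)
    (h1 : x.1.1 = y.1.1) (h2 : x.1.2.parts = y.1.2.parts) : x = y := by
  apply Subtype.ext
  obtain ⟨⟨B, P⟩, hx⟩ := x
  obtain ⟨⟨C, Q⟩, hy⟩ := y
  dsimp at h1 h2
  subst h1
  exact congrArg (Sigma.mk B) (Finpartition.ext h2)

variable {m k r : ℕ}

/-- Transport a structure along a function injective on the ground set. -/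
def structMap (G : α → β) {s : Finset α} (hG : Set.InjOn G s) (s' : Finset β)
    (hs' : s.image G = s') (x : StructOn m k r s) : StructOn m k r s' := by
  refine ⟨⟨fun i => (x.1.1 i).image G, ?_⟩, ?_, ?_, ?_, ?_, ?_, ?_⟩
  · -- the partition
    refine (fpImage G (hG.mono ?_) x.1.2).copy ?_
    · exact_mod_cast Finset.sdiff_subset
    · have hBs : Finset.univ.biUnion x.1.1 ⊆ s :=
        Finset.biUnion_subset.2 fun i _ => x.2.2.2.1 i
      rw [image_sdiff_of_injOn hG (le_refl s) hBs, hs', Finset.biUnion_image]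
  · intro i; exact (x.2.1 i).image G
  · intro i; exact le_trans (Finset.card_image_le) (x.2.2.1 i)
  · intro i
    exact le_trans (Finset.image_subset_image (x.2.2.2.1 i)) (le_of_eq hs')
  · intro i j hij
    exact image_disjoint_of_injOn hG (x.2.2.2.1 i) (x.2.2.2.1 j) (x.2.2.2.2.1 i j hij)
  · show ((x.1.2.parts).image (Finset.image G)).card = r
    rw [Finset.card_image_of_injOn, x.2.2.2.2.2.1]
    intro p hp q hq h
    have hsub : ∀ u ∈ x.1.2.parts, u ⊆ s := fun u hu =>
      le_trans (x.1.2.le hu) Finset.sdiff_subset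
    exact image_left_cancel hG (hsub p hp) (hsub q hq) h
  · show ∀ p ∈ (x.1.2.parts).image (Finset.image G), p.card ≤ m
    intro p hp
    obtain ⟨p', hp', rfl⟩ := Finset.mem_image.1 hp
    exact le_trans Finset.card_image_le (x.2.2.2.2.2.2 p' hp')

@[simp] lemma structMap_fst (G : α → β) {s : Finset α} (hG : Set.InjOn G s) (s' : Finset β)
    (hs' : s.image G = s') (x : StructOn m k r s) (i : Fin (k-1)) :
    ((structMap G hG s' hs' x).1.1 i) = (x.1.1 i).image G := rfl

@[simp] lemma structMap_parts (G : α → β) {s : Finset α} (hG : Set.InjOn G s) (s' : Finset β)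
    (hs' : s.image G = s') (x : StructOn m k r s) :
    (structMap G hG s' hs' x).1.2.parts = x.1.2.parts.image (Finset.image G) := rfl

/-- Transport of structures along a bijection between ground sets. -/
noncomputable def structEquiv (G : α → β) (H : β → α) {s : Finset α} {s' : Finset β}
    (hGs : s.image G = s') (hHG : ∀ a ∈ s, H (G a) = a) (hGH : ∀ b ∈ s', G (H b) = b) :
    StructOn m k r s ≃ StructOn m k r s' := by
  have hG : Set.InjOn G s := fun a ha a' ha' h => by
    rw [← hHG a ha, ← hHG a' ha', h]
  have hH : Set.InjOn H s' := fun b hb b' hb' h => by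
    rw [← hGH b hb, ← hGH b' hb', h]
  have hHs : s'.image H = s := by
    rw [← hGs]; exact image_cancel hHG (le_refl s)
  refine ⟨structMap G hG s' hGs, structMap H hH s hHs, ?_, ?_⟩
  · intro x
    refine struct_ext _ _ (funext fun i => ?_) ?_
    · show ((x.1.1 i).image G).image H = x.1.1 i
      exact image_cancel hHG (x.2.2.2.1 i)
    · rw [structMap_parts, structMap_parts, Finset.image_image]
      have : ∀ p ∈ x.1.2.parts, (Finset.image H ∘ Finset.image G) p = id p := by
        intro p hp
        exact image_cancel hHG (le_trans (x.1.2.le hp) Finset.sdiff_subset)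
      rw [Finset.image_congr this, Finset.image_id]
  · intro x
    refine struct_ext _ _ (funext fun i => ?_) ?_
    · show ((x.1.1 i).image H).image G = x.1.1 i
      exact image_cancel hGH (x.2.2.2.1 i)
    · rw [structMap_parts, structMap_parts, Finset.image_image]
      have : ∀ p ∈ x.1.2.parts, (Finset.image G ∘ Finset.image H) p = id p := by
        intro p hp
        exact image_cancel hGH (le_trans (x.1.2.le hp) Finset.sdiff_subset)
      rw [Finset.image_congr this, Finset.image_id]

lemma card_structOn_empty (m k r : ℕ) (γ : Type*) [DecidableEq γ] :
    Nat.card (StructOn m k r (∅ : Finset γ)) = if k ≤ 1 ∧ r = 0 then 1 else 0 := by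
  have hground : ∀ x : StructOn m k r (∅ : Finset γ), x.1.2.parts = ∅ := by
    intro x
    rw [Finpartition.parts_eq_empty_iff]
    simp [Finset.empty_sdiff]
  by_cases hk : k ≤ 1
  · have hfin : IsEmpty (Fin (k - 1)) := ⟨fun i => absurd i.isLt (by omega)⟩
    by_cases hr : r = 0
    · subst hr
      rw [if_pos ⟨hk, rfl⟩, Nat.card_eq_one_iff_unique]
      refine ⟨⟨fun x y => ?_⟩, ⟨⟨⟨fun i => hfin.elim i, ?_⟩, ?_, ?_, ?_, ?_, ?_, ?_⟩⟩⟩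
      · refine struct_ext x y (funext fun i => hfin.elim i) ?_
        rw [hground x, hground y]
      · exact (Finpartition.empty (Finset γ)).copy (by simp [Finset.empty_sdiff])
      · intro i; exact hfin.elim i
      · intro i; exact hfin.elim i
      · intro i; exact hfin.elim i
      · intro i j _; exact hfin.elim i
      · rfl
      · intro p hp
        exact absurd hp (by simp [Finpartition.empty, Finpartition.copy])
    · rw [if_neg (by tauto), Nat.card_eq_zero]
      exact Or.inl ⟨fun x => hr (by rw [← x.2.2.2.2.2.1, hground x, Finset.card_empty])⟩
  · rw [if_neg (by tauto), Nat.card_eq_zero]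
    refine Or.inl ⟨fun x => ?_⟩
    have i0 : Fin (k - 1) := ⟨0, by omega⟩
    have h1 := x.2.1 i0
    have h2 := x.2.2.2.1 i0
    rw [Finset.subset_empty] at h2
    rw [h2] at h1
    exact Finset.not_nonempty_empty h1


lemma mixedStirlingLe_eq (m n k r : ℕ) :
    mixedStirlingLe m n k r = Nat.card (StructOn m k r (Finset.univ : Finset (Fin n))) := by
  apply Nat.card_congr
  apply Equiv.subtypeEquivRight
  intro x
  constructor
  · rintro ⟨h1, h2, h3, h4, h5⟩
    exact ⟨h1, h2, fun i => Finset.subset_univ _, h3, h4, h5⟩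
  · rintro ⟨h1, h2, _, h3, h4, h5⟩
    exact ⟨h1, h2, h3, h4, h5⟩

lemma card_structOn [Fintype α] (m k r : ℕ) (s : Finset α) :
    Nat.card (StructOn m k r s) = mixedStirlingLe m s.card k r := by
  rcases eq_or_ne s ∅ with rfl | hs
  · rw [card_structOn_empty, mixedStirlingLe_eq]
    rw [Finset.card_empty]
    have : (Finset.univ : Finset (Fin 0)) = ∅ := rfl
    rw [this, card_structOn_empty]
  · have hpos : 0 < s.card := Finset.card_pos.2 (Finset.nonempty_iff_ne_empty.2 hs)
    let e := s.equivFin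
    let G : α → Fin s.card := fun a => if h : a ∈ s then e ⟨a, h⟩ else ⟨0, hpos⟩
    let H : Fin s.card → α := fun b => (e.symm b : α)
    have hHG : ∀ a ∈ s, H (G a) = a := by
      intro a ha
      simp only [G, H, dif_pos ha, Equiv.symm_apply_apply]
    have hGH : ∀ b ∈ (Finset.univ : Finset (Fin s.card)), G (H b) = b := by
      intro b _
      have hmem : (e.symm b : α) ∈ s := (e.symm b).2
      simp only [G, H, dif_pos hmem]
      rw [show (⟨(e.symm b : α), hmem⟩ : {x // x ∈ s}) = e.symm b from Subtype.ext rfl,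
        Equiv.apply_symm_apply]
    have hGs : s.image G = Finset.univ := by
      apply Finset.eq_univ_of_forall
      intro b
      rw [Finset.mem_image]
      exact ⟨H b, (e.symm b).2, hGH b (Finset.mem_univ b)⟩
    rw [Nat.card_congr (structEquiv G H hGs hHG hGH), mixedStirlingLe_eq]

variable {m k r : ℕ}

/-- The key bijection: structures with a marked part correspond to a choice of the
marked block together with a structure on the complement. -/
noncomputable def markedEquiv (hr : 1 ≤ r) (s : Finset α) :
    (Σ x : StructOn m k r s, {p : Finset α // p ∈ x.1.2.parts}) ≃
    (Σ p : {t : Finset α // t ⊆ s ∧ 1 ≤ t.card ∧ t.card ≤ m}, StructOn m k (r-1) (s \ p.1)) where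
  toFun := fun ⟨x, p, hp⟩ => by
    have hple : p ⊆ s \ Finset.univ.biUnion x.1.1 := x.1.2.le hp
    have hXp : ∀ i, Disjoint (x.1.1 i) p := by
      intro i
      rw [Finset.disjoint_left]
      intro a ha hap
      have := hple hap
      rw [Finset.mem_sdiff] at this
      exact this.2 (Finset.mem_biUnion.2 ⟨i, Finset.mem_univ i, ha⟩)
    refine ⟨⟨p, le_trans hple Finset.sdiff_subset,
        Finset.card_pos.2 (x.1.2.nonempty_of_mem_parts hp), x.2.2.2.2.2.2 p hp⟩,
      ⟨⟨x.1.1, (fpErase x.1.2 p hp).copy (by rw [sdiff_right_comm])⟩,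
        x.2.1, x.2.2.1, ?_, x.2.2.2.2.1, ?_, ?_⟩⟩
    · intro i
      exact Finset.subset_sdiff.2 ⟨x.2.2.2.1 i, hXp i⟩
    · show (x.1.2.parts.erase p).card = r - 1
      rw [Finset.card_erase_of_mem hp, x.2.2.2.2.2.1]
    · show ∀ q ∈ x.1.2.parts.erase p, q.card ≤ m
      intro q hq
      exact x.2.2.2.2.2.2 q (Finset.erase_subset _ _ hq)
  invFun := fun z => by
    obtain ⟨⟨p, hsub, h1, hm⟩, y⟩ := z
    obtain ⟨⟨B, P⟩, hne, hcm, hss, hdisj, hpc, hpm⟩ := y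
    have hpne : p ≠ ⊥ := by
      rw [Finset.bot_eq_empty, ← Finset.nonempty_iff_ne_empty]
      exact Finset.card_pos.1 h1
    refine ⟨⟨⟨B, P.extend hpne ?_ ?_⟩, hne, hcm,
      fun i => le_trans (hss i) Finset.sdiff_subset, hdisj, ?_, ?_⟩,
      ⟨p, ?_⟩⟩
    · exact Finset.sdiff_disjoint.mono_left Finset.sdiff_subset
    · show ((s \ p) \ Finset.univ.biUnion B) ⊔ p = s \ Finset.univ.biUnion B
      have hXp : Disjoint (Finset.univ.biUnion B) p := by
        rw [Finset.disjoint_left]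
        intro a ha hap
        obtain ⟨i, _, hai⟩ := Finset.mem_biUnion.1 ha
        have h := hss i hai
        rw [Finset.mem_sdiff] at h
        exact h.2 hap
      rw [sup_eq_union]
      ext a
      simp only [Finset.mem_union, Finset.mem_sdiff]
      constructor
      · rintro (⟨⟨has, _⟩, haX⟩ | hap)
        · exact ⟨has, haX⟩
        · exact ⟨hsub hap, fun haX => (Finset.disjoint_left.1 hXp) haX hap⟩
      · rintro ⟨has, haX⟩
        by_cases hap : a ∈ p
        · exact Or.inr hap
        · exact Or.inl ⟨⟨has, hap⟩, haX⟩
    · show (insert p P.parts).card = r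
      rw [Finset.card_insert_of_notMem, hpc]
      · omega
      · intro hmem
        have hle := P.le hmem
        obtain ⟨a, ha⟩ := Finset.card_pos.1 h1
        have h := le_trans hle Finset.sdiff_subset ha
        rw [Finset.mem_sdiff] at h
        exact h.2 ha
    · show ∀ q ∈ insert p P.parts, q.card ≤ m
      intro q hq
      rcases Finset.mem_insert.1 hq with rfl | hq'
      · exact hm
      · exact hpm q hq'
    · show p ∈ insert p P.parts
      exact Finset.mem_insert_self _ _
  left_inv := by
    rintro ⟨x, p, hp⟩
    have hx : ∀ (a b : Σ x : StructOn m k r s, {p : Finset α // p ∈ x.1.2.parts}),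
        ∀ (h1 : a.1 = b.1), a.2.1 = b.2.1 → a = b := by
      rintro ⟨x, p, hp⟩ ⟨y, q, hq⟩ h1 h2
      dsimp at h1 h2
      subst h1
      subst h2
      rfl
    refine hx _ _ ?_ rfl
    refine struct_ext _ _ rfl ?_
    show insert p (x.1.2.parts.erase p) = x.1.2.parts
    exact Finset.insert_erase hp
  right_inv := by
    rintro ⟨⟨p, hsub, h1, hm⟩, ⟨⟨B, P⟩, hne, hcm, hss, hdisj, hpc, hpm⟩⟩
    have hpmem : p ∉ P.parts := by
      intro hmem
      have hle := P.le hmem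
      obtain ⟨a, ha⟩ := Finset.card_pos.1 h1
      have h := le_trans hle Finset.sdiff_subset ha
      rw [Finset.mem_sdiff] at h
      exact h.2 ha
    have hx : ∀ (a b : Σ q : {t : Finset α // t ⊆ s ∧ 1 ≤ t.card ∧ t.card ≤ m},
        StructOn m k (r-1) (s \ q.1)), ∀ (h1 : a.1 = b.1), HEq a.2 b.2 → a = b := by
      rintro ⟨pa, ya⟩ ⟨pb, yb⟩ h1 h2
      dsimp at h1
      subst h1
      exact congrArg (Sigma.mk pa) (eq_of_heq h2)
    refine hx _ _ ?_ (heq_of_eq ?_)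
    · rfl
    refine struct_ext _ _ rfl ?_
    show (insert p P.parts).erase p = P.parts
    exact Finset.erase_insert hpmem

instance structOnFinite [Finite α] {s : Finset α} : Finite (StructOn m k r s) := by
  haveI := Fintype.ofFinite α
  unfold StructOn
  infer_instance

lemma nat_card_sigma {ι : Type*} [Fintype ι] (f : ι → Type*) [∀ i, Finite (f i)] :
    Nat.card (Σ i, f i) = ∑ i, Nat.card (f i) := by
  letI : ∀ i, Fintype (f i) := fun i => Fintype.ofFinite _
  simp only [Nat.card_eq_fintype_card]
  exact Fintype.card_sigma

theorem r_mul_mixedStirlingLe (n k m r : ℕ)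
    (hn : 1 ≤ n) (hk : 1 ≤ k) (hm : 1 ≤ m) (hr : 1 ≤ r) :
    r * mixedStirlingLe m n k r =
      ∑ j ∈ Finset.Icc 1 m, n.choose j * mixedStirlingLe m (n - j) k (r - 1) := by
  classical
  rw [mixedStirlingLe_eq]
  set s : Finset (Fin n) := Finset.univ with hs
  letI : Fintype (StructOn m k r s) := Fintype.ofFinite _
  have h2 : r * Nat.card (StructOn m k r s) =
      Nat.card (Σ x : StructOn m k r s, {p : Finset (Fin n) // p ∈ x.1.2.parts}) := by
    rw [nat_card_sigma]
    have hconst : ∀ x : StructOn m k r s,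
        Nat.card {p : Finset (Fin n) // p ∈ x.1.2.parts} = r := by
      intro x
      rw [Nat.card_eq_fintype_card, Fintype.card_coe]
      exact x.2.2.2.2.2.1
    rw [Finset.sum_congr rfl (fun x _ => hconst x), Finset.sum_const, smul_eq_mul,
      Nat.card_eq_fintype_card, Finset.card_univ, mul_comm]
  rw [h2, Nat.card_congr (markedEquiv hr s)]
  rw [nat_card_sigma]
  have h3 : ∀ p : {t : Finset (Fin n) // t ⊆ s ∧ 1 ≤ t.card ∧ t.card ≤ m},
      Nat.card (StructOn m k (r-1) (s \ p.1)) = mixedStirlingLe m (n - p.1.card) k (r-1) := by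
    intro p
    rw [card_structOn]
    congr 2
    rw [Finset.card_sdiff_of_subset (Finset.subset_univ _), Finset.card_univ, Fintype.card_fin]
  rw [Finset.sum_congr rfl (fun p _ => h3 p)]
  -- convert subtype sum to a sum over a filtered finset
  have h4 : ∑ p : {t : Finset (Fin n) // t ⊆ s ∧ 1 ≤ t.card ∧ t.card ≤ m},
        mixedStirlingLe m (n - p.1.card) k (r-1)
      = ∑ t ∈ Finset.univ.filter (fun t : Finset (Fin n) => t ⊆ s ∧ 1 ≤ t.card ∧ t.card ≤ m),
        mixedStirlingLe m (n - t.card) k (r-1) := by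
    exact (Finset.sum_subtype
      (Finset.univ.filter (fun t : Finset (Fin n) => t ⊆ s ∧ 1 ≤ t.card ∧ t.card ≤ m))
      (fun t => by simp only [Finset.mem_filter, Finset.mem_univ, true_and])
      (fun t => mixedStirlingLe m (n - t.card) k (r-1))).symm
  rw [h4]
  rw [← Finset.sum_fiberwise_of_maps_to (g := fun t : Finset (Fin n) => t.card)
    (t := Finset.Icc 1 m) (fun t ht => by
      rw [Finset.mem_filter] at ht
      exact Finset.mem_Icc.2 ⟨ht.2.2.1, ht.2.2.2⟩)]
  apply Finset.sum_congr rfl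
  intro j hj
  rw [Finset.mem_Icc] at hj
  have hfil : (Finset.univ.filter
      (fun t : Finset (Fin n) => t ⊆ s ∧ 1 ≤ t.card ∧ t.card ≤ m)).filter
      (fun t => t.card = j) = Finset.univ.filter (fun t : Finset (Fin n) => t.card = j) := by
    rw [Finset.filter_filter]
    apply Finset.filter_congr
    intro t _
    constructor
    · rintro ⟨_, h⟩; exact h
    · intro h
      exact ⟨⟨Finset.subset_univ _, h ▸ hj.1, h ▸ hj.2⟩, h⟩
  rw [hfil]
  have hcardfix : ∀ t ∈ Finset.univ.filter (fun t : Finset (Fin n) => t.card = j),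
      mixedStirlingLe m (n - t.card) k (r-1) = mixedStirlingLe m (n - j) k (r-1) := by
    intro t ht
    rw [(Finset.mem_filter.1 ht).2]
  rw [Finset.sum_congr rfl hcardfix, Finset.sum_const, smul_eq_mul]
  congr 1
  have : Finset.univ.filter (fun t : Finset (Fin n) => t.card = j)
      = Finset.powersetCard j Finset.univ := by
    rw [Finset.powersetCard_eq_filter, Finset.powerset_univ]
  rw [this, Finset.card_powersetCard, Finset.card_univ, Fintype.card_fin]
end

section
/- For positive integers n, k, m and r, the mixed restricted Stirling numbers of the second kind satisfy n · S_{≤m}(n,k,r) = Σ_{j=1}^{m} j · (n choose j) · [ S_{≤m}(n−j,k,r−1) + (k−1)·S_{≤m}(n−j,k−1,r) ], where the binomial coefficient (n choose j) is 0 for j > n, terms whose first argument n−j is negative are taken to be 0, and the term (k−1)·S_{≤m}(n−j,k−1,r) is taken to be 0 when k = 1. -/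
set_option linter.unusedSectionVars false

open Finset

section RelFun
variable {α β : Type*} [DecidableEq α] [DecidableEq β] {s : Finset α} {t : Finset β}

/-- Transfer a finset along a bijection between `s` and `t`. -/
noncomputable def relFun (e : {a // a ∈ s} ≃ {b // b ∈ t}) (u : Finset α) : Finset β :=
  (u.subtype (· ∈ s)).map (e.toEmbedding.trans (Function.Embedding.subtype _))

lemma mem_relFun {e : {a // a ∈ s} ≃ {b // b ∈ t}} {u : Finset α} {b : β} :
    b ∈ relFun e u ↔ ∃ a : {a // a ∈ s}, ↑a ∈ u ∧ ↑(e a) = b := by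
  simp [relFun, Finset.mem_map, Finset.mem_subtype]

lemma relFun_relFun (e : {a // a ∈ s} ≃ {b // b ∈ t}) {u : Finset α} (hu : u ⊆ s) :
    relFun e.symm (relFun e u) = u := by
  ext a
  simp only [mem_relFun]
  constructor
  · rintro ⟨b, ⟨a', ha', h1⟩, h2⟩
    have : a' = e.symm b := by
      rw [← e.symm_apply_apply a']; exact congrArg e.symm (Subtype.ext h1)
    rw [← h2, ← this]; exact ha'
  · intro ha
    exact ⟨e ⟨a, hu ha⟩, ⟨⟨a, hu ha⟩, ha, rfl⟩, by simp⟩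

lemma card_relFun (e : {a // a ∈ s} ≃ {b // b ∈ t}) {u : Finset α} (hu : u ⊆ s) :
    (relFun e u).card = u.card := by
  rw [relFun, Finset.card_map, Finset.card_subtype, Finset.filter_true_of_mem fun a ha => hu ha]

lemma relFun_empty (e : {a // a ∈ s} ≃ {b // b ∈ t}) : relFun e ∅ = ∅ := by
  ext b
  simp only [mem_relFun, Finset.notMem_empty, false_and, exists_false, iff_false, not_false_iff]

lemma relFun_union (e : {a // a ∈ s} ≃ {b // b ∈ t}) (u v : Finset α) :
    relFun e (u ∪ v) = relFun e u ∪ relFun e v := by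
  ext b
  simp only [mem_relFun, Finset.mem_union]
  constructor
  · rintro ⟨a, (h | h), rfl⟩
    · exact Or.inl ⟨a, h, rfl⟩
    · exact Or.inr ⟨a, h, rfl⟩
  · rintro (⟨a, h, rfl⟩ | ⟨a, h, rfl⟩)
    · exact ⟨a, Or.inl h, rfl⟩
    · exact ⟨a, Or.inr h, rfl⟩

lemma relFun_sdiff (e : {a // a ∈ s} ≃ {b // b ∈ t}) (u v : Finset α) :
    relFun e (u \ v) = relFun e u \ relFun e v := by
  ext b
  simp only [mem_relFun, Finset.mem_sdiff]
  constructor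
  · rintro ⟨a, ⟨hau, hav⟩, rfl⟩
    refine ⟨⟨a, hau, rfl⟩, ?_⟩
    rintro ⟨a', ha', ha'e⟩
    exact hav (by simpa using (e.injective (Subtype.ext ha'e) : a' = a) ▸ ha')
  · rintro ⟨⟨a, hau, rfl⟩, hnot⟩
    exact ⟨a, ⟨hau, fun hav => hnot ⟨a, hav, rfl⟩⟩, rfl⟩

lemma relFun_subset (e : {a // a ∈ s} ≃ {b // b ∈ t}) {u v : Finset α} (h : u ⊆ v) :
    relFun e u ⊆ relFun e v := by
  intro b hb
  rw [mem_relFun] at hb ⊢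
  obtain ⟨a, ha, rfl⟩ := hb
  exact ⟨a, h ha, rfl⟩

lemma relFun_self (e : {a // a ∈ s} ≃ {b // b ∈ t}) : relFun e s = t := by
  ext b
  simp only [mem_relFun]
  constructor
  · rintro ⟨a, _, rfl⟩; exact (e a).2
  · intro hb; exact ⟨e.symm ⟨b, hb⟩, (e.symm ⟨b, hb⟩).2, by simp⟩

lemma relFun_disjoint (e : {a // a ∈ s} ≃ {b // b ∈ t}) {u v : Finset α} (h : Disjoint u v) :
    Disjoint (relFun e u) (relFun e v) := by
  rw [Finset.disjoint_left] at h ⊢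
  rintro b hbu hbv
  rw [mem_relFun] at hbu hbv
  obtain ⟨a, hau, rfl⟩ := hbu
  obtain ⟨a', ha'v, ha'e⟩ := hbv
  exact h hau ((e.injective (Subtype.ext ha'e) : a' = a) ▸ ha'v)

lemma relFun_inj (e : {a // a ∈ s} ≃ {b // b ∈ t}) {u v : Finset α} (hu : u ⊆ s) (hv : v ⊆ s)
    (h : relFun e u = relFun e v) : u = v := by
  rw [← relFun_relFun e hu, h, relFun_relFun e hv]

lemma relFun_biUnion {ι : Type*} (e : {a // a ∈ s} ≃ {b // b ∈ t}) [Fintype ι] [DecidableEq ι]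
    (B : ι → Finset α) :
    relFun e (Finset.univ.biUnion B) = Finset.univ.biUnion fun i => relFun e (B i) := by
  ext b
  simp only [mem_relFun, Finset.mem_biUnion, Finset.mem_univ, true_and]
  tauto

lemma relFun_nonempty (e : {a // a ∈ s} ≃ {b // b ∈ t}) {u : Finset α} (hu : u ⊆ s)
    (h : u.Nonempty) : (relFun e u).Nonempty := by
  rw [← Finset.card_pos, card_relFun e hu, Finset.card_pos]; exact h

/-- Transfer a finpartition along a bijection between `s` and `t`. -/
noncomputable def Finpartition.relabel {a : Finset α} (P : Finpartition a) (ha : a ⊆ s)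
    (e : {a // a ∈ s} ≃ {b // b ∈ t}) : Finpartition (relFun e a) where
  parts := P.parts.image (relFun e)
  supIndep := by
    rw [Finset.supIndep_iff_pairwiseDisjoint]
    rintro u hu v hv huv
    simp only [Finset.coe_image, Set.mem_image, Finset.mem_coe] at hu hv
    obtain ⟨p, hp, rfl⟩ := hu
    obtain ⟨q, hq, rfl⟩ := hv
    have hpq : p ≠ q := fun h => huv (by rw [h])
    exact relFun_disjoint e (P.disjoint hp hq hpq)
  sup_parts := by
    rw [Finset.sup_image]
    have := Finset.comp_sup_eq_sup_comp (s := P.parts) (f := id) (relFun e)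
      (fun u v => relFun_union e u v) (relFun_empty e)
    rw [Function.comp_id] at this
    rw [Function.id_comp, ← this, P.sup_parts]
  bot_notMem := by
    simp only [Finset.bot_eq_empty, Finset.mem_image]
    rintro ⟨p, hp, hpe⟩
    have := relFun_nonempty e ((P.le hp).trans ha) (P.nonempty_of_mem_parts hp)
    rw [hpe] at this
    exact Finset.not_nonempty_empty this

lemma Finpartition.relabel_parts {a : Finset α} (P : Finpartition a) (ha : a ⊆ s)
    (e : {a // a ∈ s} ≃ {b // b ∈ t}) : (P.relabel ha e).parts = P.parts.image (relFun e) := rfl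

end RelFun
section Str
variable {α β : Type*} [DecidableEq α] [DecidableEq β]

/-- Structures counted by the mixed restricted Stirling numbers, on ground finset `s`:
`K` ordered pairwise disjoint nonempty blocks of size at most `m` inside `s`, together with a
partition of the rest of `s` into `r` blocks of size at most `m`. -/
def StrOn (m : ℕ) (s : Finset α) (K r : ℕ) : Type _ :=
  {x : Σ B : Fin K → Finset α, Finpartition (s \ Finset.univ.biUnion B) //
    (∀ i, x.1 i ⊆ s) ∧ (∀ i, (x.1 i).Nonempty) ∧ (∀ i, (x.1 i).card ≤ m) ∧
    (∀ i j, i ≠ j → Disjoint (x.1 i) (x.1 j)) ∧ x.2.parts.card = r ∧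
    ∀ p ∈ x.2.parts, p.card ≤ m}

instance {m : ℕ} {s : Finset α} {K r : ℕ} [Fintype α] : Finite (StrOn m s K r) := by
  unfold StrOn; infer_instance

lemma StrOn.ext {m : ℕ} {s : Finset α} {K r : ℕ} {x y : StrOn m s K r}
    (h1 : x.1.1 = y.1.1) (h2 : x.1.2.parts = y.1.2.parts) : x = y := by
  obtain ⟨⟨B, P⟩, hx⟩ := x
  obtain ⟨⟨B', P'⟩, hy⟩ := y
  simp only at h1 h2
  subst h1
  exact Subtype.ext (congrArg (Sigma.mk B) (Finpartition.ext h2))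

variable {s : Finset α} {t : Finset β} {m K r : ℕ}

lemma StrOn.ground_subset (x : StrOn m s K r) : s \ Finset.univ.biUnion x.1.1 ⊆ s :=
  Finset.sdiff_subset

lemma StrOn.part_subset (x : StrOn m s K r) {p : Finset α} (hp : p ∈ x.1.2.parts) : p ⊆ s :=
  (x.1.2.le hp).trans x.ground_subset

/-- Transport a structure along a bijection of ground sets. -/
noncomputable def strMap (e : {a // a ∈ s} ≃ {b // b ∈ t}) (x : StrOn m s K r) :
    StrOn m t K r :=
  ⟨⟨fun i => relFun e (x.1.1 i), (x.1.2.relabel Finset.sdiff_subset e).copy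
      (by rw [relFun_sdiff, relFun_self, relFun_biUnion])⟩,
    fun i => (relFun_subset e (x.2.1 i)).trans (le_of_eq (relFun_self e)),
    fun i => relFun_nonempty e (x.2.1 i) (x.2.2.1 i),
    fun i => le_of_eq_of_le (card_relFun e (x.2.1 i)) (x.2.2.2.1 i),
    fun i j hij => relFun_disjoint e (x.2.2.2.2.1 i j hij),
    by
      rw [Finpartition.copy_parts, Finpartition.relabel_parts,
        Finset.card_image_of_injOn fun u hu v hv huv =>
          relFun_inj e (x.part_subset hu) (x.part_subset hv) huv]
      exact x.2.2.2.2.2.1,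
    by
      rw [Finpartition.copy_parts, Finpartition.relabel_parts]
      intro p hp
      rw [Finset.mem_image] at hp
      obtain ⟨q, hq, rfl⟩ := hp
      rw [card_relFun e (x.part_subset hq)]
      exact x.2.2.2.2.2.2 q hq⟩

lemma strMap_fst (e : {a // a ∈ s} ≃ {b // b ∈ t}) (x : StrOn m s K r) :
    (strMap e x).1.1 = fun i => relFun e (x.1.1 i) := rfl

lemma strMap_parts (e : {a // a ∈ s} ≃ {b // b ∈ t}) (x : StrOn m s K r) :
    (strMap e x).1.2.parts = x.1.2.parts.image (relFun e) := rfl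

lemma strMap_strMap (e : {a // a ∈ s} ≃ {b // b ∈ t}) (x : StrOn m s K r) :
    strMap e.symm (strMap e x) = x := by
  refine StrOn.ext ?_ ?_
  · rw [strMap_fst, strMap_fst]
    funext i
    exact relFun_relFun e (x.2.1 i)
  · rw [strMap_parts, strMap_parts, Finset.image_image]
    rw [show x.1.2.parts.image (relFun e.symm ∘ relFun e) = x.1.2.parts.image id from
      Finset.image_congr fun p hp => relFun_relFun e (x.part_subset hp), Finset.image_id]

/-- Transporting structures along a bijection of ground sets is an equivalence. -/
noncomputable def strEquiv (e : {a // a ∈ s} ≃ {b // b ∈ t}) :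
    StrOn m s K r ≃ StrOn m t K r where
  toFun := strMap e
  invFun := strMap e.symm
  left_inv := strMap_strMap e
  right_inv x := by
    have := strMap_strMap e.symm x
    rwa [Equiv.symm_symm] at this

end Str
lemma card_strOn_univ (m n K r : ℕ) :
    Nat.card (StrOn m (Finset.univ : Finset (Fin n)) K r) = mixedStirlingLe m n (K + 1) r := by
  show _ = Nat.card {x : Σ B : Fin K → Finset (Fin n),
      Finpartition ((Finset.univ : Finset (Fin n)) \ Finset.univ.biUnion B) //
    (∀ i, (x.1 i).Nonempty) ∧ (∀ i, (x.1 i).card ≤ m) ∧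
    (∀ i j, i ≠ j → Disjoint (x.1 i) (x.1 j)) ∧
    x.2.parts.card = r ∧ ∀ p ∈ x.2.parts, p.card ≤ m}
  refine Nat.card_congr (Equiv.subtypeEquivRight fun x => ?_)
  constructor
  · rintro ⟨-, h⟩; exact h
  · intro h; exact ⟨fun i => Finset.subset_univ _, h⟩

lemma card_strOn {n : ℕ} (m : ℕ) (s : Finset (Fin n)) (K r : ℕ) :
    Nat.card (StrOn m s K r) = mixedStirlingLe m s.card (K + 1) r := by
  rw [← card_strOn_univ m s.card K r]
  exact Nat.card_congr (strEquiv
    (s.equivFin.trans (Equiv.subtypeUnivEquiv fun x => Finset.mem_univ x).symm))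
section PartFiber

lemma Finpartition.parts_avoid_of_mem {α : Type*} [DecidableEq α]
    {a : Finset α} (P : Finpartition a) {c : Finset α} (hc : c ∈ P.parts) :
    (P.avoid c).parts = P.parts.erase c := by
  ext p
  rw [Finpartition.mem_avoid, Finset.mem_erase]
  constructor
  · rintro ⟨d, hd, hdc, rfl⟩
    have hne : d ≠ c := fun h => hdc (h ▸ le_refl _)
    have hdd : Disjoint d c := P.disjoint hd hc hne
    rw [hdd.sdiff_eq_left]
    exact ⟨hne, hd⟩
  · rintro ⟨hne, hp⟩
    have hdd : Disjoint p c := P.disjoint hp hc hne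
    refine ⟨p, hp, fun hle => ?_, hdd.sdiff_eq_left⟩
    exact (P.nonempty_of_mem_parts hp).ne_empty (hdd.eq_bot_of_le hle)

variable {n m K r : ℕ}

lemma StrOn.disjoint_block_ground {s : Finset (Fin n)} (x : StrOn m s K r) (i : Fin K)
    {p : Finset (Fin n)} (hp : p ⊆ s \ Finset.univ.biUnion x.1.1) : Disjoint (x.1.1 i) p := by
  rw [Finset.disjoint_right]
  intro a hap hai
  have := hp hap
  rw [Finset.mem_sdiff, Finset.mem_biUnion] at this
  exact this.2 ⟨i, Finset.mem_univ i, hai⟩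

/-- Removing a fixed part `c` of the partition gives a structure on `univ \ c` with one
fewer part. -/
noncomputable def partFiberEquiv (c : Finset (Fin n)) (hc : c.Nonempty) (hcm : c.card ≤ m) :
    {x : StrOn m (Finset.univ : Finset (Fin n)) K (r + 1) // c ∈ x.1.2.parts} ≃
      StrOn m (Finset.univ \ c) K r where
  toFun x :=
    ⟨⟨x.1.1.1, (x.1.1.2.avoid c).copy (sdiff_right_comm ..)⟩,
      fun i => by
        rw [Finset.subset_sdiff]
        exact ⟨Finset.subset_univ _, x.1.disjoint_block_ground i (x.1.1.2.le x.2)⟩,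
      x.1.2.2.1, x.1.2.2.2.1, x.1.2.2.2.2.1,
      by
        rw [Finpartition.copy_parts, x.1.1.2.parts_avoid_of_mem x.2,
          Finset.card_erase_of_mem x.2, x.1.2.2.2.2.2.1, Nat.add_sub_cancel],
      by
        rw [Finpartition.copy_parts, x.1.1.2.parts_avoid_of_mem x.2]
        exact fun p hp => x.1.2.2.2.2.2.2 p (Finset.mem_of_mem_erase hp)⟩
  invFun y :=
    ⟨⟨⟨y.1.1, y.1.2.extend (by simpa [Finset.bot_eq_empty] using hc.ne_empty)
        (Finset.sdiff_disjoint.mono_left Finset.sdiff_subset)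
        (by
          have hyc : c ≤ Finset.univ \ Finset.univ.biUnion y.1.1 := by
            refine Finset.subset_sdiff.2 ⟨Finset.subset_univ _, ?_⟩
            exact Finset.disjoint_biUnion_right .. |>.2
              fun i _ => (Finset.sdiff_disjoint.mono_left (y.2.1 i)).symm
          rw [sdiff_right_comm, sdiff_sup_cancel hyc])⟩,
      fun i => Finset.subset_univ _, y.2.2.1, y.2.2.2.1, y.2.2.2.2.1,
      by
        rw [Finpartition.extend_parts, Finset.card_insert_of_notMem, y.2.2.2.2.2.1]
        intro hmem
        obtain ⟨a, ha⟩ := hc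
        exact (Finset.mem_sdiff.1 ((y.1.2.le hmem).trans Finset.sdiff_subset ha)).2 ha,
      by
        rw [Finpartition.extend_parts]
        intro p hp
        rcases Finset.mem_insert.1 hp with rfl | hp
        · exact hcm
        · exact y.2.2.2.2.2.2 p hp⟩,
      by rw [Finpartition.extend_parts]; exact Finset.mem_insert_self c _⟩
  left_inv x := by
    refine Subtype.ext (StrOn.ext rfl ?_)
    simp only [Finpartition.extend_parts, Finpartition.copy_parts]
    rw [x.1.1.2.parts_avoid_of_mem x.2, Finset.insert_erase x.2]
  right_inv y := by
    refine StrOn.ext rfl ?_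
    simp only [Finpartition.copy_parts]
    rw [Finpartition.parts_avoid_of_mem _
      (by rw [Finpartition.extend_parts]; exact Finset.mem_insert_self c _),
      Finpartition.extend_parts, Finset.erase_insert]
    intro hmem
    obtain ⟨a, ha⟩ := hc
    exact (Finset.mem_sdiff.1 ((y.1.2.le hmem).trans Finset.sdiff_subset ha)).2 ha

end PartFiber
section BlockFiber

variable {n m K r : ℕ}

/-- Removing the `t`-th block `c` gives a structure on `univ \ c` with one fewer block. -/
noncomputable def blockFiberEquiv (c : Finset (Fin n)) (hc : c.Nonempty) (hcm : c.card ≤ m)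
    (t : Fin (K + 1)) :
    {x : StrOn m (Finset.univ : Finset (Fin n)) (K + 1) r // x.1.1 t = c} ≃
      StrOn m (Finset.univ \ c) K r where
  toFun x :=
    ⟨⟨fun i => x.1.1.1 (t.succAbove i), x.1.1.2.copy (by
        ext a
        simp only [Finset.mem_sdiff, Finset.mem_biUnion, Finset.mem_univ, true_and]
        constructor
        · intro h
          refine ⟨fun hac => h ⟨t, x.2.symm ▸ hac⟩, ?_⟩
          rintro ⟨j, hj⟩; exact h ⟨t.succAbove j, hj⟩
        · rintro ⟨h1, h2⟩ ⟨i, hi⟩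
          rcases eq_or_ne i t with rfl | hne
          · exact h1 (x.2 ▸ hi)
          · obtain ⟨j, rfl⟩ := Fin.exists_succAbove_eq hne
            exact h2 ⟨j, hi⟩)⟩,
      fun i => by
        rw [Finset.subset_sdiff]
        refine ⟨Finset.subset_univ _, ?_⟩
        have := x.1.2.2.2.2.1 (t.succAbove i) t (Fin.succAbove_ne t i)
        rw [x.2] at this
        exact this,
      fun i => x.1.2.2.1 _, fun i => x.1.2.2.2.1 _,
      fun i j hij => x.1.2.2.2.2.1 _ _
        fun h => hij (Fin.succAbove_right_injective h),
      by rw [Finpartition.copy_parts]; exact x.1.2.2.2.2.2.1,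
      by rw [Finpartition.copy_parts]; exact x.1.2.2.2.2.2.2⟩
  invFun y :=
    ⟨⟨⟨t.insertNth c y.1.1, y.1.2.copy (by
        ext a
        simp only [Finset.mem_sdiff, Finset.mem_biUnion, Finset.mem_univ, true_and]
        constructor
        · rintro ⟨h1, h2⟩ ⟨i, hi⟩
          rcases eq_or_ne i t with rfl | hne
          · rw [Fin.insertNth_apply_same] at hi; exact h1 hi
          · obtain ⟨j, rfl⟩ := Fin.exists_succAbove_eq hne
            rw [Fin.insertNth_apply_succAbove] at hi
            exact h2 ⟨j, hi⟩
        · intro h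
          refine ⟨fun hac => h ⟨t, by rw [Fin.insertNth_apply_same]; exact hac⟩, ?_⟩
          rintro ⟨j, hj⟩
          exact h ⟨t.succAbove j, by rw [Fin.insertNth_apply_succAbove]; exact hj⟩)⟩,
      fun i => Finset.subset_univ _,
      fun i => by
        dsimp only
        rcases eq_or_ne i t with rfl | hne
        · rw [Fin.insertNth_apply_same]; exact hc
        · obtain ⟨j, rfl⟩ := Fin.exists_succAbove_eq hne
          rw [Fin.insertNth_apply_succAbove]; exact y.2.2.1 j,
      fun i => by
        dsimp only
        rcases eq_or_ne i t with rfl | hne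
        · rw [Fin.insertNth_apply_same]; exact hcm
        · obtain ⟨j, rfl⟩ := Fin.exists_succAbove_eq hne
          rw [Fin.insertNth_apply_succAbove]; exact y.2.2.2.1 j,
      fun i j hij => by
        dsimp only
        have hblock : ∀ j', Disjoint (y.1.1 j') c := fun j' =>
          Finset.sdiff_disjoint.mono_left (y.2.1 j')
        rcases eq_or_ne i t with rfl | hne
        · obtain ⟨j', rfl⟩ := Fin.exists_succAbove_eq (Ne.symm hij)
          rw [Fin.insertNth_apply_same, Fin.insertNth_apply_succAbove]
          exact (hblock j').symm
        · obtain ⟨i', rfl⟩ := Fin.exists_succAbove_eq hne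
          rw [Fin.insertNth_apply_succAbove]
          rcases eq_or_ne j t with rfl | hne'
          · rw [Fin.insertNth_apply_same]; exact hblock i'
          · obtain ⟨j', rfl⟩ := Fin.exists_succAbove_eq hne'
            rw [Fin.insertNth_apply_succAbove]
            exact y.2.2.2.2.1 i' j'
              fun h => hij (congrArg t.succAbove h),
      by rw [Finpartition.copy_parts]; exact y.2.2.2.2.2.1,
      by rw [Finpartition.copy_parts]; exact y.2.2.2.2.2.2⟩,
      by dsimp only; rw [Fin.insertNth_apply_same]⟩
  left_inv x := by
    refine Subtype.ext (StrOn.ext ?_ ?_)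
    · funext i
      dsimp only
      rcases eq_or_ne i t with rfl | hne
      · rw [Fin.insertNth_apply_same]; exact x.2.symm
      · obtain ⟨j, rfl⟩ := Fin.exists_succAbove_eq hne
        rw [Fin.insertNth_apply_succAbove]
    · simp only [Finpartition.copy_parts]
  right_inv y := by
    refine StrOn.ext ?_ ?_
    · funext i
      dsimp only
      rw [Fin.insertNth_apply_succAbove]
    · simp only [Finpartition.copy_parts]

end BlockFiber
section Count

lemma card_partFiber (m n K r' : ℕ) (c : Finset (Fin n)) :
    Nat.card {x : StrOn m (Finset.univ : Finset (Fin n)) K (r' + 1) // c ∈ x.1.2.parts}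
      = if c.Nonempty ∧ c.card ≤ m then mixedStirlingLe m (n - c.card) (K + 1) r' else 0 := by
  split_ifs with h
  · rw [Nat.card_congr (partFiberEquiv c h.1 h.2), card_strOn,
      Finset.card_sdiff_of_subset (Finset.subset_univ c), Finset.card_univ, Fintype.card_fin]
  · haveI : IsEmpty {x : StrOn m (Finset.univ : Finset (Fin n)) K (r' + 1) //
        c ∈ x.1.2.parts} := ⟨fun x =>
      h ⟨x.1.1.2.nonempty_of_mem_parts x.2, x.1.2.2.2.2.2.2 c x.2⟩⟩
    exact Nat.card_of_isEmpty

lemma card_blockFiber (m n K r : ℕ) (t : Fin K) (c : Finset (Fin n)) :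
    Nat.card {x : StrOn m (Finset.univ : Finset (Fin n)) K r // x.1.1 t = c}
      = if c.Nonempty ∧ c.card ≤ m then mixedStirlingLe m (n - c.card) K r else 0 := by
  cases K with
  | zero => exact t.elim0
  | succ K' =>
    split_ifs with h
    · rw [Nat.card_congr (blockFiberEquiv c h.1 h.2 t), card_strOn,
        Finset.card_sdiff_of_subset (Finset.subset_univ c), Finset.card_univ, Fintype.card_fin]
    · haveI : IsEmpty {x : StrOn m (Finset.univ : Finset (Fin n)) (K' + 1) r //
          x.1.1 t = c} := ⟨fun x =>
        h ⟨x.2 ▸ x.1.2.2.1 t, x.2 ▸ x.1.2.2.2.1 t⟩⟩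
      exact Nat.card_of_isEmpty

lemma sum_finsets_eq (n m : ℕ) (f : ℕ → ℕ) :
    ∑ c : Finset (Fin n), (if c.Nonempty ∧ c.card ≤ m then f c.card else 0) * c.card
      = ∑ j ∈ Finset.Icc 1 m, j * n.choose j * f j := by
  classical
  have h1 : ∀ c : Finset (Fin n),
      (if c.Nonempty ∧ c.card ≤ m then f c.card else 0) * c.card
        = ∑ j ∈ Finset.Icc 1 m, if c.card = j then f j * j else 0 := by
    intro c
    rw [Finset.sum_ite_eq]
    by_cases h : c.Nonempty ∧ c.card ≤ m
    · rw [if_pos h, if_pos (Finset.mem_Icc.2 ⟨Finset.card_pos.2 h.1, h.2⟩)]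
    · rw [if_neg h, if_neg, zero_mul]
      intro hmem
      rw [Finset.mem_Icc] at hmem
      exact h ⟨Finset.card_pos.1 hmem.1, hmem.2⟩
  rw [Finset.sum_congr rfl fun c _ => h1 c, Finset.sum_comm]
  refine Finset.sum_congr rfl fun j hj => ?_
  rw [← Finset.sum_filter, Finset.sum_const, smul_eq_mul]
  have hfil : (Finset.univ.filter fun c : Finset (Fin n) => c.card = j)
      = Finset.powersetCard j Finset.univ := by
    rw [Finset.powersetCard_eq_filter, Finset.powerset_univ]
  rw [hfil, Finset.card_powersetCard, Finset.card_univ, Fintype.card_fin]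
  ring

lemma main_count (m n K r' : ℕ) :
    n * Nat.card (StrOn m (Finset.univ : Finset (Fin n)) K (r' + 1)) =
      ∑ j ∈ Finset.Icc 1 m, j * n.choose j *
        (mixedStirlingLe m (n - j) (K + 1) r' + K * mixedStirlingLe m (n - j) K (r' + 1)) := by
  classical
  set X := StrOn m (Finset.univ : Finset (Fin n)) K (r' + 1) with hX
  haveI : Fintype X := Fintype.ofFinite X
  rw [Nat.card_eq_fintype_card]
  have hdecomp : ∀ x : X,
      (∑ i : Fin K, (x.1.1 i).card) + ∑ p ∈ x.1.2.parts, p.card = n := by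
    intro x
    rw [x.1.2.sum_card_parts, ← Finset.card_biUnion
      (fun i _ j _ hij => x.2.2.2.2.1 i j hij), Nat.add_comm,
      Finset.card_sdiff_add_card_eq_card (Finset.subset_univ _), Finset.card_univ,
      Fintype.card_fin]
  have step1 : n * Fintype.card X
      = (∑ x : X, ∑ i : Fin K, (x.1.1 i).card) + ∑ x : X, ∑ p ∈ x.1.2.parts, p.card := by
    rw [← Finset.sum_add_distrib, Finset.sum_congr rfl fun x _ => hdecomp x,
      Finset.sum_const, smul_eq_mul, Finset.card_univ, mul_comm]
  rw [step1]
  -- block part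
  have hblock : (∑ x : X, ∑ i : Fin K, (x.1.1 i).card)
      = K * ∑ j ∈ Finset.Icc 1 m, j * n.choose j * mixedStirlingLe m (n - j) K (r' + 1) := by
    rw [Finset.sum_comm]
    have hfix : ∀ i : Fin K, (∑ x : X, (x.1.1 i).card)
        = ∑ j ∈ Finset.Icc 1 m, j * n.choose j * mixedStirlingLe m (n - j) K (r' + 1) := by
      intro i
      have h2 : ∀ x : X, (x.1.1 i).card
          = ∑ c : Finset (Fin n), if x.1.1 i = c then c.card else 0 := by
        intro x
        rw [Finset.sum_ite_eq, if_pos (Finset.mem_univ _)]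
      rw [Finset.sum_congr rfl fun x _ => h2 x, Finset.sum_comm, ← sum_finsets_eq n m
        (fun j => mixedStirlingLe m (n - j) K (r' + 1))]
      refine Finset.sum_congr rfl fun c _ => ?_
      rw [← Finset.sum_filter, Finset.sum_const, smul_eq_mul]
      congr 1
      rw [← Fintype.card_subtype, ← Nat.card_eq_fintype_card,
        card_blockFiber m n K (r' + 1) i c]
    rw [Finset.sum_congr rfl fun i _ => hfix i, Finset.sum_const, smul_eq_mul,
      Finset.card_univ, Fintype.card_fin]
  -- part part
  have hpart : (∑ x : X, ∑ p ∈ x.1.2.parts, p.card)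
      = ∑ j ∈ Finset.Icc 1 m, j * n.choose j * mixedStirlingLe m (n - j) (K + 1) r' := by
    have h2 : ∀ x : X, (∑ p ∈ x.1.2.parts, p.card)
        = ∑ c : Finset (Fin n), if c ∈ x.1.2.parts then c.card else 0 := by
      intro x
      rw [Finset.sum_ite_mem, Finset.univ_inter]
    rw [Finset.sum_congr rfl fun x _ => h2 x, Finset.sum_comm, ← sum_finsets_eq n m
      (fun j => mixedStirlingLe m (n - j) (K + 1) r')]
    refine Finset.sum_congr rfl fun c _ => ?_
    rw [← Finset.sum_filter, Finset.sum_const, smul_eq_mul]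
    congr 1
    rw [← Fintype.card_subtype, ← Nat.card_eq_fintype_card, card_partFiber m n K r' c]
  rw [hblock, hpart, Finset.mul_sum, ← Finset.sum_add_distrib]
  refine Finset.sum_congr rfl fun j hj => ?_
  ring

end Count

theorem n_mul_mixedStirlingLe (n k m r : ℕ)
    (hn : 1 ≤ n) (hk : 1 ≤ k) (hm : 1 ≤ m) (hr : 1 ≤ r) :
    n * mixedStirlingLe m n k r =
      ∑ j ∈ Finset.Icc 1 m,
        j * n.choose j *
          (mixedStirlingLe m (n - j) k (r - 1) +
            (k - 1) * mixedStirlingLe m (n - j) (k - 1) r) := by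
  obtain ⟨K, rfl⟩ := Nat.exists_eq_add_of_le hk
  obtain ⟨r', rfl⟩ := Nat.exists_eq_add_of_le hr
  rw [show 1 + K = K + 1 from Nat.add_comm 1 K, show 1 + r' = r' + 1 from Nat.add_comm 1 r']
  rw [← card_strOn_univ m n K (r' + 1), main_count m n K r']
  simp only [Nat.add_sub_cancel]
end

section
/- For positive integers n, k, r and ℓ, the mixed associated Stirling numbers of the second kind satisfy the recurrence S_{≥ℓ}(n,k,r) = Σ_{i=ℓ−1}^{n−1} (n−1 choose i) · [ (k−1)·S_{≥ℓ}(n−i−1,k−1,r) + S_{≥ℓ}(n−i−1,k,r−1) ], where the term (k−1)·S_{≥ℓ}(n−i−1,k−1,r) is taken to be 0 when k = 1. -/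
set_option linter.unusedSectionVars false

open Finset

/-- The mixed associated Stirling number of the second kind `S_{≥ ℓ}(n, k, r)`: the number of
pairs `(π, (B_2, …, B_k))` where `B_2, …, B_k` are pairwise disjoint nonempty subsets of
`{1, …, n}` of size at least `ℓ` and `π` is a partition of the complement of their union into
exactly `r` nonempty blocks, each of size at least `ℓ`. -/
noncomputable def mixedStirlingGe (l n k r : ℕ) : ℕ :=
  Nat.card {x : Σ B : Fin (k - 1) → Finset (Fin n),
      Finpartition ((Finset.univ : Finset (Fin n)) \ Finset.univ.biUnion B) //
    (∀ i, (x.1 i).Nonempty) ∧ (∀ i, l ≤ (x.1 i).card) ∧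
    (∀ i j, i ≠ j → Disjoint (x.1 i) (x.1 j)) ∧
    x.2.parts.card = r ∧ ∀ p ∈ x.2.parts, l ≤ p.card}

namespace MixedAux

variable {α : Type*} [Fintype α] [DecidableEq α] {β : Type*} [Fintype β] [DecidableEq β]

def Good (l : ℕ) (s : Finset α) (K r : ℕ)
    (x : (Fin K → Finset α) × Finset (Finset α)) : Prop :=
  (∀ i, x.1 i ⊆ s) ∧ (∀ i, l ≤ (x.1 i).card) ∧
  (∀ i j, i ≠ j → Disjoint (x.1 i) (x.1 j)) ∧
  x.2.SupIndep id ∧ x.2.sup id = s \ Finset.univ.biUnion x.1 ∧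
  x.2.card = r ∧ ∀ p ∈ x.2, l ≤ p.card

noncomputable def cnt (l : ℕ) (s : Finset α) (K r : ℕ) : ℕ :=
  Nat.card {x : (Fin K → Finset α) × Finset (Finset α) // Good l s K r x}

theorem mixed_eq_cnt (l n k r : ℕ) (hl : 1 ≤ l) :
    mixedStirlingGe l n k r = cnt l (Finset.univ : Finset (Fin n)) (k - 1) r := by
  refine Nat.card_congr ?_
  refine ⟨fun z => ⟨(z.1.1, z.1.2.parts), ?_⟩, fun w => ⟨⟨w.1.1, ⟨w.1.2, w.2.2.2.2.1, w.2.2.2.2.2.1, ?_⟩⟩, ?_⟩, ?_, ?_⟩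
  · obtain ⟨⟨B, P⟩, h1, h2, h3, h4, h5⟩ := z
    exact ⟨fun i => Finset.subset_univ _, h2, h3, P.supIndep, P.sup_parts, h4, h5⟩
  · intro hbot
    have := w.2.2.2.2.2.2.2 _ hbot
    simp at this
    omega
  · obtain ⟨⟨B, Q⟩, h1, h2, h3, h4, h5, h6, h7⟩ := w
    refine ⟨fun i => Finset.card_pos.1 (lt_of_lt_of_le hl (h2 i)), h2, h3, h6, h7⟩
  · intro z
    rfl
  · intro w
    rfl


lemma map_preimage_of_subset_map (f : α ↪ β) {t : Finset β} {u : Finset α} (h : t ⊆ u.map f) :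
    (t.preimage (⇑f) f.injective.injOn).map f = t := by
  ext b
  simp only [Finset.mem_map, Finset.mem_preimage]
  constructor
  · rintro ⟨a, ha, rfl⟩; exact ha
  · intro hb
    obtain ⟨a, _, rfl⟩ := Finset.mem_map.1 (h hb)
    exact ⟨a, hb, rfl⟩

lemma sup_id_map (f : α ↪ β) (Q : Finset (Finset α)) :
    (Q.sup id).map f = Q.sup (fun p => p.map f) := by
  induction Q using Finset.induction_on with
  | empty => simp
  | insert _ _ _ ih => simp [Finset.sup_insert, Finset.map_union, ih]

lemma biUnion_map (f : α ↪ β) {K : ℕ} (B : Fin K → Finset α) :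
    (Finset.univ.biUnion fun i => (B i).map f) = (Finset.univ.biUnion B).map f := by
  ext b
  simp only [Finset.mem_biUnion, Finset.mem_map, Finset.mem_univ, true_and]
  constructor
  · rintro ⟨i, a, ha, rfl⟩; exact ⟨a, ⟨i, ha⟩, rfl⟩
  · rintro ⟨a, ⟨i, ha⟩, rfl⟩; exact ⟨i, a, ha, rfl⟩

lemma map_sdiff' (f : α ↪ β) (s t : Finset α) : (s \ t).map f = s.map f \ t.map f := by
  simp only [Finset.map_eq_image]
  exact Finset.image_sdiff s t f.injective

theorem cnt_map (f : α ↪ β) (l : ℕ) (s : Finset α) (K r : ℕ) :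
    cnt l (s.map f) K r = cnt l s K r := by
  refine Nat.card_congr (Equiv.symm ?_)
  have pre : Finset β → Finset α := fun t => t.preimage (⇑f) f.injective.injOn
  refine ⟨fun x => ⟨((fun i => (x.1.1 i).map f), x.1.2.image (fun p => p.map f)), ?_⟩,
    fun y => ⟨((fun i => (y.1.1 i).preimage (⇑f) f.injective.injOn),
      y.1.2.image (fun p => p.preimage (⇑f) f.injective.injOn)), ?_⟩, ?_, ?_⟩
  · obtain ⟨⟨B, Q⟩, h1, h2, h3, h4, h5, h6, h7⟩ := x
    refine ⟨fun i => Finset.map_subset_map.2 (h1 i), fun i => by simpa using h2 i,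
      fun i j hij => (Finset.disjoint_map f).2 (h3 i j hij), ?_, ?_, ?_, ?_⟩
    · rw [Finset.supIndep_iff_pairwiseDisjoint] at h4 ⊢
      intro u hu v hv huv
      simp only [Finset.coe_image, Set.mem_image, Finset.mem_coe] at hu hv
      obtain ⟨p, hp, rfl⟩ := hu
      obtain ⟨q, hq, rfl⟩ := hv
      have hpq : p ≠ q := by rintro rfl; exact huv rfl
      exact (Finset.disjoint_map f).2 (h4 hp hq hpq)
    · dsimp only
      rw [Finset.sup_image]
      simp only [Function.id_comp]
      rw [← sup_id_map, h5, map_sdiff', ← biUnion_map]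
    · rw [Finset.card_image_of_injective _ (Finset.map_injective f), h6]
    · intro p hp
      obtain ⟨q, hq, rfl⟩ := Finset.mem_image.1 hp
      simpa using h7 q hq
  · obtain ⟨⟨B, Q⟩, h1, h2, h3, h4, h5, h6, h7⟩ := y
    have hQs : ∀ q ∈ Q, q ⊆ s.map f := by
      intro q hq
      exact (Finset.le_sup (f := id) hq).trans (h5.le.trans Finset.sdiff_subset)
    have hrt : ∀ q ∈ Q, (q.preimage (⇑f) f.injective.injOn).map f = q :=
      fun q hq => map_preimage_of_subset_map f (hQs q hq)
    have hrtB : ∀ i, ((B i).preimage (⇑f) f.injective.injOn).map f = B i :=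
      fun i => map_preimage_of_subset_map f (h1 i)
    have hinj : Set.InjOn (fun q : Finset β => q.preimage (⇑f) f.injective.injOn) ↑Q := by
      intro u hu v hv huv
      rw [← hrt u hu, ← hrt v hv]
      simp only at huv
      rw [huv]
    refine ⟨fun i => ?_, fun i => ?_, fun i j hij => ?_, ?_, ?_, ?_, ?_⟩
    · rw [← Finset.map_subset_map (f := f), hrtB i]; exact h1 i
    · dsimp only
      have hc := Finset.card_map (s := (B i).preimage (⇑f) f.injective.injOn) f
      rw [hrtB i] at hc
      have h2i : l ≤ #(B i) := h2 i
      omega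
    · rw [← Finset.disjoint_map f, hrtB i, hrtB j]
      exact h3 i j hij
    · rw [Finset.supIndep_iff_pairwiseDisjoint] at h4 ⊢
      intro u hu v hv huv
      simp only [Finset.coe_image, Set.mem_image, Finset.mem_coe] at hu hv
      obtain ⟨p, hp, rfl⟩ := hu
      obtain ⟨q, hq, rfl⟩ := hv
      have hpq : p ≠ q := by rintro rfl; exact huv rfl
      have hd : Disjoint p q := h4 hp hq hpq
      rw [← hrt p hp, ← hrt q hq] at hd
      exact (Finset.disjoint_map f).1 hd
    · apply Finset.map_injective f
      rw [sup_id_map, Finset.sup_image, map_sdiff', ← biUnion_map]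
      have e1 : Q.sup ((fun p => Finset.map f p) ∘ fun q => q.preimage (⇑f) f.injective.injOn)
          = Q.sup id := Finset.sup_congr rfl (fun q hq => hrt q hq)
      have e2 : (Finset.univ.biUnion fun i =>
            ((B i).preimage (⇑f) f.injective.injOn).map f) = Finset.univ.biUnion B :=
        Finset.biUnion_congr rfl (fun i _ => hrtB i)
      rw [e1, e2, h5]
    · rw [Finset.card_image_of_injOn hinj, h6]
    · intro p hp
      obtain ⟨q, hq, rfl⟩ := Finset.mem_image.1 hp
      have := Finset.card_map (s := q.preimage (⇑f) f.injective.injOn) f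
      rw [hrt q hq] at this
      have := h7 q hq
      omega
  · intro x
    apply Subtype.ext
    obtain ⟨⟨B, Q⟩, hx⟩ := x
    simp only
    refine Prod.ext (funext fun i => Finset.preimage_map f (B i)) ?_
    ext q
    simp only [Finset.image_image, Finset.mem_image, Function.comp]
    constructor
    · rintro ⟨p, hp, rfl⟩
      rwa [Finset.preimage_map]
    · intro hq
      exact ⟨q, hq, Finset.preimage_map f q⟩
  · intro y
    apply Subtype.ext
    obtain ⟨⟨B, Q⟩, h1, h2, h3, h4, h5, h6, h7⟩ := y
    have hQs : ∀ q ∈ Q, q ⊆ s.map f := by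
      intro q hq
      exact (Finset.le_sup (f := id) hq).trans (h5.le.trans Finset.sdiff_subset)
    simp only
    refine Prod.ext (funext fun i => map_preimage_of_subset_map f (h1 i)) ?_
    ext q
    simp only [Finset.image_image, Finset.mem_image, Function.comp]
    constructor
    · rintro ⟨p, hp, rfl⟩
      rwa [map_preimage_of_subset_map f (hQs p hp)]
    · intro hq
      exact ⟨q, hq, map_preimage_of_subset_map f (hQs q hq)⟩


theorem cnt_univ_eq (l : ℕ) (s : Finset α) (K r : ℕ) :
    cnt l s K r = cnt l (Finset.univ : Finset (Fin s.card)) K r := by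
  classical
  have hcard : Fintype.card (↥s) = s.card := Fintype.card_coe s
  let e : ↥s ≃ Fin s.card := Fintype.equivFinOfCardEq hcard
  let f : Fin s.card ↪ α := ⟨fun i => (e.symm i : α),
    fun i j h => by simpa using congrArg e (Subtype.ext h)⟩
  have hmap : (Finset.univ : Finset (Fin s.card)).map f = s := by
    ext x
    simp only [Finset.mem_map, Finset.mem_univ, true_and]
    constructor
    · rintro ⟨i, rfl⟩; exact (e.symm i).2
    · intro hx; exact ⟨e ⟨x, hx⟩, by show ((e.symm (e ⟨x, hx⟩) : ↥s) : α) = x; simp⟩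
  conv_lhs => rw [← hmap]
  exact cnt_map f l univ K r

def gset (a : α) {K : ℕ} (x : (Fin K → Finset α) × Finset (Finset α)) : Finset α :=
  (Finset.univ.sup fun j => if a ∈ x.1 j then x.1 j else ∅) ⊔
    x.2.sup fun p => if a ∈ p then p else ∅

lemma gset_block {l r K : ℕ} {s : Finset α} {a : α}
    {x : (Fin K → Finset α) × Finset (Finset α)} (hx : Good l s K r x) {j : Fin K}
    (hj : a ∈ x.1 j) : gset a x = x.1 j := by
  obtain ⟨h1, h2, h3, h4, h5, h6, h7⟩ := hx
  apply le_antisymm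
  · refine sup_le (Finset.sup_le fun j' _ => ?_) (Finset.sup_le fun p hp => ?_)
    · split_ifs with h
      · rcases eq_or_ne j' j with rfl | hne
        · exact le_rfl
        · exact absurd hj (Finset.disjoint_left.1 (h3 j' j hne) h)
      · exact Finset.empty_subset _
    · split_ifs with h
      · exfalso
        have hpz : a ∈ x.2.sup id := (Finset.le_sup (f := id) hp) h
        rw [h5] at hpz
        exact (Finset.mem_sdiff.1 hpz).2 (Finset.mem_biUnion.2 ⟨j, Finset.mem_univ j, hj⟩)
      · exact Finset.empty_subset _
  · refine le_sup_of_le_left ?_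
    calc x.1 j = (if a ∈ x.1 j then x.1 j else ∅) := (if_pos hj).symm
      _ ≤ _ := Finset.le_sup (f := fun j' => if a ∈ x.1 j' then x.1 j' else ∅)
          (Finset.mem_univ j)

lemma gset_part {l r K : ℕ} {s : Finset α} {a : α}
    {x : (Fin K → Finset α) × Finset (Finset α)} (hx : Good l s K r x) {p : Finset α}
    (hp : p ∈ x.2) (hap : a ∈ p) : gset a x = p := by
  obtain ⟨h1, h2, h3, h4, h5, h6, h7⟩ := hx
  have hanb : a ∉ Finset.univ.biUnion x.1 := by
    have : a ∈ x.2.sup id := (Finset.le_sup (f := id) hp) hap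
    rw [h5] at this
    exact (Finset.mem_sdiff.1 this).2
  apply le_antisymm
  · refine sup_le (Finset.sup_le fun j' _ => ?_) (Finset.sup_le fun q hq => ?_)
    · split_ifs with h
      · exact absurd (Finset.mem_biUnion.2 ⟨j', Finset.mem_univ j', h⟩) hanb
      · exact Finset.empty_subset _
    · split_ifs with h
      · rcases eq_or_ne q p with rfl | hne
        · exact le_rfl
        · have hd := Finset.supIndep_iff_pairwiseDisjoint.1 h4 hq hp hne
          exact absurd hap (Finset.disjoint_left.1 hd h)
      · exact Finset.empty_subset _
  · refine le_sup_of_le_right ?_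
    calc p = (if a ∈ p then p else ∅) := (if_pos hap).symm
      _ ≤ _ := Finset.le_sup (f := fun q => if a ∈ q then q else ∅) hp

lemma gset_cases {l r K : ℕ} {s : Finset α} {a : α}
    {x : (Fin K → Finset α) × Finset (Finset α)} (hx : Good l s K r x) (ha : a ∈ s) :
    (∃ j, a ∈ x.1 j) ∨ (gset a x ∈ x.2 ∧ a ∈ gset a x) := by
  by_cases h : ∃ j, a ∈ x.1 j
  · exact Or.inl h
  · right
    have hanb : a ∉ Finset.univ.biUnion x.1 := by
      simp only [Finset.mem_biUnion, Finset.mem_univ, true_and]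
      exact fun ⟨j, hj⟩ => h ⟨j, hj⟩
    have hmem : a ∈ x.2.sup id := by
      rw [hx.2.2.2.2.1]
      exact Finset.mem_sdiff.2 ⟨ha, hanb⟩
    rw [Finset.mem_sup] at hmem
    obtain ⟨p, hp, hap⟩ := hmem
    rw [gset_part hx hp hap]
    exact ⟨hp, hap⟩

lemma nat_card_sigma {ι : Type*} [Fintype ι] (F : ι → Type*) [∀ i, Finite (F i)] :
    Nat.card (Σ i, F i) = ∑ i, Nat.card (F i) := by
  letI : ∀ i, Fintype (F i) := fun i => Fintype.ofFinite _
  simp only [Nat.card_eq_fintype_card]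
  exact Fintype.card_sigma

lemma nat_card_split {γ : Type*} [Finite γ] (p q : γ → Prop) :
    Nat.card {x // p x} = Nat.card {x : γ // p x ∧ q x} + Nat.card {x : γ // p x ∧ ¬ q x} := by
  classical
  have e : {x : γ // p x} ≃ {x : γ // p x ∧ q x} ⊕ {x : γ // p x ∧ ¬ q x} := by
    refine ⟨fun x => if h : q x.1 then Sum.inl ⟨x.1, x.2, h⟩ else Sum.inr ⟨x.1, x.2, h⟩,
      fun y => Sum.elim (fun z => ⟨z.1, z.2.1⟩) (fun z => ⟨z.1, z.2.1⟩) y, ?_, ?_⟩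
    · intro x; by_cases h : q x.1 <;> simp [h]
    · rintro (z | z)
      · simp [z.2.2]
      · simp [z.2.2]
  rw [Nat.card_congr e, Nat.card_sum]


lemma part_case (l r K : ℕ) (s : Finset α) (a : α) (B : Finset α)
    (haB : a ∈ B) (hBs : B ⊆ s) (hlB : l ≤ B.card) :
    Nat.card {x : (Fin K → Finset α) × Finset (Finset α) //
        (Good l s K (r + 1) x ∧ gset a x = B) ∧ B ∈ x.2} = cnt l (s \ B) K r := by
  refine Nat.card_congr ⟨fun x => ⟨(x.1.1, x.1.2.erase B), ?_⟩,
    fun y => ⟨(y.1.1, insert B y.1.2), ?_⟩, ?_, ?_⟩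
  · obtain ⟨⟨Bx, Q⟩, ⟨hx, hg⟩, hB2⟩ := x
    obtain ⟨h1, h2, h3, h4, h5, h6, h7⟩ := hx
    dsimp only at h1 h2 h3 h4 h5 h6 h7 hB2 ⊢
    have hBsub : B ⊆ s \ Finset.univ.biUnion Bx := h5 ▸ Finset.le_sup (f := id) hB2
    have hdisjB : ∀ i, Disjoint (Bx i) B := fun i =>
      (Finset.sdiff_disjoint.mono hBsub (Finset.subset_biUnion_of_mem Bx (Finset.mem_univ i))).symm
    refine ⟨fun i => Finset.subset_sdiff.2 ⟨h1 i, hdisjB i⟩, h2, h3,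
      h4.subset (Finset.erase_subset _ _), ?_, ?_, fun p hp => h7 p (Finset.mem_of_mem_erase hp)⟩
    · have hdd : Disjoint B ((Q.erase B).sup id) :=
        h4 (Finset.erase_subset _ _) hB2 (Finset.notMem_erase _ _)
      have hsum : (insert B (Q.erase B)).sup id = s \ Finset.univ.biUnion Bx := by
        rw [Finset.insert_erase hB2, h5]
      rw [Finset.sup_insert] at hsum
      simp only [id_eq] at hsum
      have h9 : (Q.erase B).sup id = (s \ Finset.univ.biUnion Bx) \ B := by
        rw [← hsum, Finset.sup_eq_union, Finset.union_sdiff_cancel_left hdd]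
      rw [h9, sdiff_right_comm]
    · rw [Finset.card_erase_of_mem hB2, h6]
      omega
  · obtain ⟨⟨By, Q⟩, hy⟩ := y
    obtain ⟨h1, h2, h3, h4, h5, h6, h7⟩ := hy
    dsimp only at h1 h2 h3 h4 h5 h6 h7 ⊢
    have hU' : Finset.univ.biUnion By ⊆ s \ B := Finset.biUnion_subset.2 fun i _ => h1 i
    have hQsub : ∀ q ∈ Q, q ⊆ s \ B := fun q hq =>
      (Finset.le_sup (f := id) hq).trans (h5.le.trans Finset.sdiff_subset)
    have hBnot : B ∉ Q := fun hB => (Finset.mem_sdiff.1 (hQsub B hB haB)).2 haB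
    have hgood : Good l s K (r + 1) (By, insert B Q) := by
      refine ⟨fun i => (h1 i).trans Finset.sdiff_subset, h2, h3, ?_, ?_, ?_, ?_⟩
      · rw [Finset.supIndep_iff_pairwiseDisjoint] at h4 ⊢
        rw [Finset.coe_insert]
        refine Set.pairwiseDisjoint_insert.2 ⟨h4, fun q hq _ => ?_⟩
        exact Finset.disjoint_left.2 fun z hzB hzq =>
          (Finset.mem_sdiff.1 (hQsub q hq hzq)).2 hzB
      · rw [Finset.sup_insert, h5]
        simp only [id_eq]
        ext z
        simp only [Finset.sup_eq_union, Finset.mem_union, Finset.mem_sdiff]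
        constructor
        · rintro (hz | ⟨⟨hz1, _⟩, hz3⟩)
          · exact ⟨hBs hz, fun hzU => (Finset.mem_sdiff.1 (hU' hzU)).2 hz⟩
          · exact ⟨hz1, hz3⟩
        · rintro ⟨hz1, hz2⟩
          by_cases hzB : z ∈ B
          · exact Or.inl hzB
          · exact Or.inr ⟨⟨hz1, hzB⟩, hz2⟩
      · rw [Finset.card_insert_of_notMem hBnot, h6]
      · intro p hp
        rcases Finset.mem_insert.1 hp with rfl | hp'
        · exact hlB
        · exact h7 p hp'
    exact ⟨⟨hgood, gset_part hgood (Finset.mem_insert_self _ _) haB⟩,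
      Finset.mem_insert_self _ _⟩
  · intro x
    obtain ⟨⟨Bx, Q⟩, ⟨hx, hg⟩, hB2⟩ := x
    apply Subtype.ext
    dsimp only
    rw [Prod.mk.injEq]
    exact ⟨rfl, Finset.insert_erase hB2⟩
  · intro y
    obtain ⟨⟨By, Q⟩, hy⟩ := y
    apply Subtype.ext
    dsimp only
    rw [Prod.mk.injEq]
    refine ⟨rfl, Finset.erase_insert fun hB => ?_⟩
    have hq : B ⊆ (s \ B) \ Finset.univ.biUnion By :=
      hy.2.2.2.2.1 ▸ Finset.le_sup (f := id) hB
    exact (Finset.mem_sdiff.1 (Finset.mem_sdiff.1 (hq haB)).1).2 haB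


lemma block_case0 (l r : ℕ) (s : Finset α) (a : α) (B : Finset α) (ha : a ∈ s) :
    Nat.card {x : (Fin 0 → Finset α) × Finset (Finset α) //
        (Good l s 0 (r + 1) x ∧ gset a x = B) ∧ B ∉ x.2} = 0 := by
  have : IsEmpty {x : (Fin 0 → Finset α) × Finset (Finset α) //
      (Good l s 0 (r + 1) x ∧ gset a x = B) ∧ B ∉ x.2} := by
    refine ⟨fun x => ?_⟩
    obtain ⟨x, ⟨hx, hg⟩, hB2⟩ := x
    rcases gset_cases hx ha with ⟨j, _⟩ | ⟨hp, _⟩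
    · exact j.elim0
    · rw [hg] at hp
      exact hB2 hp
  exact Nat.card_of_isEmpty

lemma block_case (l r K' : ℕ) (s : Finset α) (a : α) (B : Finset α)
    (haB : a ∈ B) (hBs : B ⊆ s) (hlB : l ≤ B.card) :
    Nat.card {x : (Fin (K' + 1) → Finset α) × Finset (Finset α) //
        (Good l s (K' + 1) (r + 1) x ∧ gset a x = B) ∧ B ∉ x.2} =
      (K' + 1) * cnt l (s \ B) K' (r + 1) := by
  classical
  have hdisB : ∀ t : Finset α, t ⊆ s \ B → Disjoint B t := fun t ht =>
    Finset.disjoint_left.2 fun u huB hut => (Finset.mem_sdiff.1 (ht hut)).2 huB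
  have hnotB : ∀ t : Finset α, t ⊆ s \ B → t ≠ B := by
    intro t ht hc
    subst hc
    exact (Finset.mem_sdiff.1 (ht haB)).2 haB
  -- the forward map from the product to the fiber
  have main : ∀ (j : Fin (K' + 1)) (By : Fin K' → Finset α) (Q : Finset (Finset α)),
      Good l (s \ B) K' (r + 1) (By, Q) →
      (Good l s (K' + 1) (r + 1) (j.insertNth B By, Q) ∧
        gset a (j.insertNth B By, Q) = B) ∧ B ∉ Q := by
    intro j By Q hy
    obtain ⟨h1, h2, h3, h4, h5, h6, h7⟩ := hy
    dsimp only at h1 h2 h3 h4 h5 h6 h7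
    have hXsame : (j.insertNth B By : Fin (K' + 1) → Finset α) j = B :=
      Fin.insertNth_apply_same (α := fun _ => Finset α) j B By
    have hXsucc : ∀ i, (j.insertNth B By : Fin (K' + 1) → Finset α) (j.succAbove i) = By i :=
      fun i => Fin.insertNth_apply_succAbove (α := fun _ => Finset α) j B By i
    have hUB : Finset.univ.biUnion (j.insertNth B By) = B ∪ Finset.univ.biUnion By := by
      ext u
      simp only [Finset.mem_biUnion, Finset.mem_union, Finset.mem_univ, true_and]
      constructor
      · rintro ⟨i, hi⟩
        rcases eq_or_ne i j with rfl | hne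
        · exact Or.inl (hXsame ▸ hi)
        · obtain ⟨i', rfl⟩ := Fin.exists_succAbove_eq hne
          rw [hXsucc i'] at hi
          exact Or.inr ⟨i', hi⟩
      · rintro (hu | ⟨i', hi⟩)
        · exact ⟨j, by rw [hXsame]; exact hu⟩
        · exact ⟨j.succAbove i', by rw [hXsucc i']; exact hi⟩
    have hgood : Good l s (K' + 1) (r + 1) (j.insertNth B By, Q) := by
      refine ⟨?_, ?_, ?_, h4, ?_, h6, h7⟩
      · intro i
        dsimp only
        rcases eq_or_ne i j with rfl | hne
        · rw [hXsame]; exact hBs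
        · obtain ⟨i', rfl⟩ := Fin.exists_succAbove_eq hne
          rw [hXsucc i']
          exact (h1 i').trans Finset.sdiff_subset
      · intro i
        dsimp only
        rcases eq_or_ne i j with rfl | hne
        · rw [hXsame]; exact hlB
        · obtain ⟨i', rfl⟩ := Fin.exists_succAbove_eq hne
          rw [hXsucc i']
          exact h2 i'
      · intro i1 i2 hne
        dsimp only
        rcases eq_or_ne i1 j with rfl | hne1
        · obtain ⟨i2', rfl⟩ := Fin.exists_succAbove_eq (Ne.symm hne)
          rw [hXsame, hXsucc i2']
          exact hdisB _ (h1 i2')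
        · obtain ⟨i1', rfl⟩ := Fin.exists_succAbove_eq hne1
          rcases eq_or_ne i2 j with rfl | hne2
          · rw [hXsame, hXsucc i1']
            exact (hdisB _ (h1 i1')).symm
          · obtain ⟨i2', rfl⟩ := Fin.exists_succAbove_eq hne2
            rw [hXsucc i1', hXsucc i2']
            refine h3 i1' i2' fun hc => hne ?_
            rw [hc]
      · dsimp only
        rw [h5, hUB]
        ext u
        simp only [Finset.mem_sdiff, Finset.mem_union]
        constructor
        · rintro ⟨⟨hu1, hu2⟩, hu3⟩
          exact ⟨hu1, fun h => h.elim hu2 hu3⟩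
        · rintro ⟨hu1, hu2⟩
          exact ⟨⟨hu1, fun h => hu2 (Or.inl h)⟩, fun h => hu2 (Or.inr h)⟩
    have hBnotQ : B ∉ Q := fun hB =>
      hnotB B ((Finset.le_sup (f := id) hB).trans (h5.le.trans Finset.sdiff_subset)) rfl
    have haX : a ∈ (j.insertNth B By : Fin (K' + 1) → Finset α) j := by
      rw [hXsame]; exact haB
    exact ⟨⟨hgood, (gset_block hgood haX).trans hXsame⟩, hBnotQ⟩
  let F : Fin (K' + 1) × {y : (Fin K' → Finset α) × Finset (Finset α) //
      Good l (s \ B) K' (r + 1) y} →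
      {x : (Fin (K' + 1) → Finset α) × Finset (Finset α) //
        (Good l s (K' + 1) (r + 1) x ∧ gset a x = B) ∧ B ∉ x.2} :=
    fun z => ⟨(z.1.insertNth B z.2.1.1, z.2.1.2), by
      obtain ⟨j, ⟨⟨By, Q⟩, hy⟩⟩ := z
      exact main j By Q hy⟩
  have hFbij : Function.Bijective F := by
    constructor
    · rintro ⟨j1, ⟨⟨B1, Q1⟩, hy1⟩⟩ ⟨j2, ⟨⟨B2, Q2⟩, hy2⟩⟩ heq
      have heq' := congrArg Subtype.val heq
      rw [Prod.mk.injEq] at heq'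
      obtain ⟨hf, hQ⟩ := heq'
      dsimp only at hf hQ
      have hj : j1 = j2 := by
        by_contra hne
        have h1 := congrFun hf j2
        rw [Fin.insertNth_apply_same (α := fun _ => Finset α)] at h1
        obtain ⟨i', rfl⟩ := Fin.exists_succAbove_eq (Ne.symm hne)
        rw [Fin.insertNth_apply_succAbove (α := fun _ => Finset α)] at h1
        exact hnotB _ (hy1.1 i') h1
      subst hj
      have hBeq : B1 = B2 := by
        funext i
        have := congrFun hf (j1.succAbove i)
        rwa [Fin.insertNth_apply_succAbove (α := fun _ => Finset α),
          Fin.insertNth_apply_succAbove (α := fun _ => Finset α)] at this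
      subst hBeq
      subst hQ
      rfl
    · rintro ⟨⟨Bx, Q⟩, hprop⟩
      have hx := hprop.1.1
      obtain ⟨h1, h2, h3, h4, h5, h6, h7⟩ := hx
      dsimp only at h1 h2 h3 h4 h5 h6 h7
      have hex : ∃ j, Bx j = B := by
        rcases gset_cases hprop.1.1 (hBs haB) with ⟨j, hj⟩ | ⟨hp, _⟩
        · exact ⟨j, by rw [← hprop.1.2, gset_block hprop.1.1 hj]⟩
        · rw [hprop.1.2] at hp
          exact absurd hp hprop.2
      obtain ⟨j, hj⟩ := hex
      have hgood' : Good l (s \ B) K' (r + 1) ((fun i => Bx (j.succAbove i)), Q) := by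
        have hU : Finset.univ.biUnion Bx =
            B ∪ Finset.univ.biUnion (fun i => Bx (j.succAbove i)) := by
          ext u
          simp only [Finset.mem_biUnion, Finset.mem_union, Finset.mem_univ, true_and]
          constructor
          · rintro ⟨i, hi⟩
            rcases eq_or_ne i j with rfl | hne
            · exact Or.inl (hj ▸ hi)
            · obtain ⟨i', rfl⟩ := Fin.exists_succAbove_eq hne
              exact Or.inr ⟨i', hi⟩
          · rintro (hu | ⟨i', hi⟩)
            · exact ⟨j, by rw [hj]; exact hu⟩
            · exact ⟨j.succAbove i', hi⟩
        refine ⟨?_, fun i => h2 _, ?_, h4, ?_, h6, h7⟩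
        · intro i
          dsimp only
          refine Finset.subset_sdiff.2 ⟨h1 _, ?_⟩
          have := h3 (j.succAbove i) j (Fin.succAbove_ne j i)
          rwa [hj] at this
        · intro i1 i2 hne
          exact h3 _ _ fun hc => hne (Fin.succAbove_right_injective hc)
        · dsimp only
          rw [h5, hU]
          ext u
          simp only [Finset.mem_sdiff, Finset.mem_union]
          constructor
          · rintro ⟨hu1, hu2⟩
            exact ⟨⟨hu1, fun h => hu2 (Or.inl h)⟩, fun h => hu2 (Or.inr h)⟩
          · rintro ⟨⟨hu1, hu2⟩, hu3⟩
            exact ⟨hu1, fun h => h.elim hu2 hu3⟩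
      refine ⟨(j, ⟨((fun i => Bx (j.succAbove i)), Q), hgood'⟩), ?_⟩
      apply Subtype.ext
      dsimp only [F]
      rw [Prod.mk.injEq]
      refine ⟨?_, rfl⟩
      rw [← hj]
      exact Fin.insertNth_self_removeNth _ _
  rw [← Nat.card_eq_of_bijective F hFbij, Nat.card_prod, Nat.card_eq_fintype_card,
    Fintype.card_fin]
  rfl


lemma cnt_fiber (l r K : ℕ) (s : Finset α) (a : α) (ha : a ∈ s) :
    cnt l s K (r + 1) = ∑ B ∈ s.powerset.filter (fun B => a ∈ B ∧ l ≤ B.card),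
      (K * cnt l (s \ B) (K - 1) (r + 1) + cnt l (s \ B) K r) := by
  classical
  have e : {x : (Fin K → Finset α) × Finset (Finset α) // Good l s K (r + 1) x} ≃
      Σ B : Finset α, {x : (Fin K → Finset α) × Finset (Finset α) //
        Good l s K (r + 1) x ∧ gset a x = B} :=
    ⟨fun x => ⟨gset a x.1, ⟨x.1, x.2, rfl⟩⟩, fun y => ⟨y.2.1, y.2.2.1⟩,
      fun x => rfl, fun y => by obtain ⟨B, x, hx, rfl⟩ := y; rfl⟩
  rw [cnt, Nat.card_congr e, nat_card_sigma]
  have hvan : ∀ B ∈ (Finset.univ : Finset (Finset α)),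
      B ∉ s.powerset.filter (fun B => a ∈ B ∧ l ≤ B.card) →
      Nat.card {x : (Fin K → Finset α) × Finset (Finset α) //
        Good l s K (r + 1) x ∧ gset a x = B} = 0 := by
    intro B _ hB
    have : IsEmpty {x : (Fin K → Finset α) × Finset (Finset α) //
        Good l s K (r + 1) x ∧ gset a x = B} := by
      refine ⟨fun x => hB ?_⟩
      obtain ⟨x, hx, rfl⟩ := x
      simp only [Finset.mem_filter, Finset.mem_powerset]
      rcases gset_cases hx ha with ⟨j, hj⟩ | ⟨hp, hap⟩
      · rw [gset_block hx hj]
        exact ⟨hx.1 j, hj, hx.2.1 j⟩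
      · have hsub : gset a x ⊆ x.2.sup id := Finset.le_sup (f := id) hp
        rw [hx.2.2.2.2.1] at hsub
        exact ⟨hsub.trans Finset.sdiff_subset, hap, hx.2.2.2.2.2.2 _ hp⟩
    exact Nat.card_of_isEmpty
  rw [← Finset.sum_subset (Finset.subset_univ _) hvan]
  refine Finset.sum_congr rfl fun B hB => ?_
  simp only [Finset.mem_filter, Finset.mem_powerset] at hB
  obtain ⟨hBs, haB, hlB⟩ := hB
  rw [nat_card_split _ (fun x => B ∈ x.2)]
  rw [part_case l r K s a B haB hBs hlB]
  cases K with
  | zero =>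
    rw [block_case0 l r s a B ha]
    omega
  | succ K' =>
    rw [block_case l r K' s a B haB hBs hlB]
    rw [Nat.add_sub_cancel]
    exact add_comm _ _

lemma count_subsets (s : Finset α) (a : α) (ha : a ∈ s) (l i : ℕ) (hli : l ≤ i + 1) :
    ((s.powerset.filter fun B => a ∈ B ∧ l ≤ B.card).filter fun B => B.card - 1 = i).card
      = (s.card - 1).choose i := by
  classical
  have h1 : (s.card - 1).choose i = ((s.erase a).powersetCard i).card := by
    rw [Finset.card_powersetCard, Finset.card_erase_of_mem ha]
  rw [h1]
  refine Finset.card_bij' (fun B _ => B.erase a) (fun C _ => insert a C) ?_ ?_ ?_ ?_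
  · intro B hB
    simp only [Finset.mem_filter, Finset.mem_powerset] at hB
    obtain ⟨⟨hBs, haB, hlB⟩, hBc⟩ := hB
    rw [Finset.mem_powersetCard]
    exact ⟨Finset.erase_subset_erase a hBs, by rw [Finset.card_erase_of_mem haB]; exact hBc⟩
  · intro C hC
    rw [Finset.mem_powersetCard] at hC
    obtain ⟨hCs, hCc⟩ := hC
    have haC : a ∉ C := fun h => (Finset.mem_erase.1 (hCs h)).1 rfl
    simp only [Finset.mem_filter, Finset.mem_powerset]
    have hcard : (insert a C).card = i + 1 := by
      rw [Finset.card_insert_of_notMem haC, hCc]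
    refine ⟨⟨Finset.insert_subset ha (hCs.trans (Finset.erase_subset a s)),
      Finset.mem_insert_self a C, ?_⟩, ?_⟩
    · rw [hcard]; exact hli
    · rw [hcard]
      omega
  · intro B hB
    simp only [Finset.mem_filter, Finset.mem_powerset] at hB
    exact Finset.insert_erase hB.1.2.1
  · intro C hC
    rw [Finset.mem_powersetCard] at hC
    have haC : a ∉ C := fun h => (Finset.mem_erase.1 (hC.1 h)).1 rfl
    exact Finset.erase_insert haC

end MixedAux

theorem mixedStirlingGe_recurrence (n k r l : ℕ)
    (hn : 1 ≤ n) (hk : 1 ≤ k) (hr : 1 ≤ r) (hl : 1 ≤ l) :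
    mixedStirlingGe l n k r =
      ∑ i ∈ Finset.Icc (l - 1) (n - 1),
        (n - 1).choose i *
          ((k - 1) * mixedStirlingGe l (n - i - 1) (k - 1) r +
            mixedStirlingGe l (n - i - 1) k (r - 1)) := by
  classical
  obtain ⟨r', rfl⟩ : ∃ r', r = r' + 1 := ⟨r - 1, (Nat.succ_pred_eq_of_pos hr).symm⟩
  have ha : (⟨0, hn⟩ : Fin n) ∈ (Finset.univ : Finset (Fin n)) := Finset.mem_univ _
  rw [MixedAux.mixed_eq_cnt l n k (r' + 1) hl,
    MixedAux.cnt_fiber l r' (k - 1) Finset.univ ⟨0, hn⟩ ha]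
  have hmaps : ∀ B ∈ (Finset.univ : Finset (Fin n)).powerset.filter
      (fun B => (⟨0, hn⟩ : Fin n) ∈ B ∧ l ≤ B.card),
      B.card - 1 ∈ Finset.Icc (l - 1) (n - 1) := by
    intro B hB
    simp only [Finset.mem_filter, Finset.mem_powerset] at hB
    obtain ⟨hBs, haB, hlB⟩ := hB
    have h1 : 1 ≤ B.card := Finset.card_pos.2 ⟨_, haB⟩
    have h2 : B.card ≤ n := by
      have := Finset.card_le_card hBs
      rwa [Finset.card_univ, Fintype.card_fin] at this
    simp only [Finset.mem_Icc]
    omega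
  rw [← Finset.sum_fiberwise_of_maps_to hmaps]
  refine Finset.sum_congr rfl fun i hi => ?_
  simp only [Finset.mem_Icc] at hi
  have hcardB : ∀ B ∈ ((Finset.univ : Finset (Fin n)).powerset.filter
      (fun B => (⟨0, hn⟩ : Fin n) ∈ B ∧ l ≤ B.card)).filter (fun B => B.card - 1 = i),
      B.card = i + 1 := by
    intro B hB
    simp only [Finset.mem_filter, Finset.mem_powerset] at hB
    have h1 : 1 ≤ B.card := Finset.card_pos.2 ⟨_, hB.1.2.1⟩
    omega
  have hterm : ∀ B ∈ ((Finset.univ : Finset (Fin n)).powerset.filter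
      (fun B => (⟨0, hn⟩ : Fin n) ∈ B ∧ l ≤ B.card)).filter (fun B => B.card - 1 = i),
      ((k - 1) * MixedAux.cnt l (Finset.univ \ B) (k - 1 - 1) (r' + 1) +
        MixedAux.cnt l (Finset.univ \ B) (k - 1) r') =
      ((k - 1) * MixedAux.cnt l (Finset.univ : Finset (Fin (n - i - 1))) (k - 1 - 1) (r' + 1) +
        MixedAux.cnt l (Finset.univ : Finset (Fin (n - i - 1))) (k - 1) r') := by
    intro B hB
    have hc : (Finset.univ \ B).card = n - i - 1 := by
      rw [Finset.card_sdiff_of_subset (Finset.subset_univ B), hcardB B hB, Finset.card_univ,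
        Fintype.card_fin]
      omega
    rw [MixedAux.cnt_univ_eq l (Finset.univ \ B) (k - 1 - 1) (r' + 1),
      MixedAux.cnt_univ_eq l (Finset.univ \ B) (k - 1) r', hc]
  rw [Finset.sum_congr rfl hterm, Finset.sum_const,
    MixedAux.count_subsets (Finset.univ : Finset (Fin n)) ⟨0, hn⟩ ha l i (by omega), smul_eq_mul,
    Finset.card_univ, Fintype.card_fin]
  rw [← MixedAux.mixed_eq_cnt l (n - i - 1) (k - 1) (r' + 1) hl,
    ← MixedAux.mixed_eq_cnt l (n - i - 1) k r' hl]
  simp only [Nat.add_sub_cancel]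
end

section
/- For positive integers n, k, r and ℓ with n ≥ 1, the mixed associated Stirling numbers of the second kind satisfy S_{≥ℓ}(n,k,r) = (k+r−1)·S_{≥ℓ}(n−1,k,r) + (n−1 choose ℓ−1) · [ (k−1)·S_{≥ℓ}(n−ℓ,k−1,r) + S_{≥ℓ}(n−ℓ,k,r−1) ], where terms whose first argument is negative are taken to be 0 and the term (k−1)·S_{≥ℓ}(n−ℓ,k−1,r) is taken to be 0 when k = 1. -/
open Finset
set_option linter.unusedSectionVars false
set_option maxHeartbeats 1000000

namespace MixedAux

variable {α β : Type*} [DecidableEq α] [DecidableEq β]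





noncomputable instance {s : Finset α} : Fintype (Finpartition s) := by
  apply Fintype.ofInjective
    (fun P : Finpartition s => (P.parts.subtype (· ∈ s.powerset) : Finset ↥(s.powerset)))
  intro P Q h
  apply Finpartition.ext
  have key : ∀ R : Finpartition s,
      (R.parts.subtype (· ∈ s.powerset)).map (Function.Embedding.subtype _) = R.parts := by
    intro R
    rw [Finset.subtype_map]
    exact Finset.filter_true_of_mem fun p hp => Finset.mem_powerset.2 (R.le hp)
  rw [← key P, ← key Q]
  exact congrArg _ h

lemma sup_parts_sdiff {s : Finset α} (P : Finpartition s) {Q : Finset (Finset α)}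
    (hQ : Q ⊆ P.parts) : (P.parts \ Q).sup id = s \ Q.sup id := by
  ext x
  simp only [mem_sup, mem_sdiff, id]
  constructor
  · rintro ⟨p, hp, hx⟩
    refine ⟨P.le hp.1 hx, fun hxQ => ?_⟩
    obtain ⟨q, hq, hxq⟩ := hxQ
    exact hp.2 (P.eq_of_mem_parts hp.1 (hQ hq) hx hxq ▸ hq)
  · rintro ⟨hxs, hxQ⟩
    obtain ⟨p, hp, hxp⟩ := P.exists_mem hxs
    refine ⟨p, ⟨hp, fun hpQ => hxQ ⟨p, hpQ, hxp⟩⟩, hxp⟩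

/-- partitions of `s` into `m` parts each of size at least `l`. -/
def Part (l m : ℕ) (s : Finset α) : Type _ :=
  {P : Finpartition s // P.parts.card = m ∧ ∀ p ∈ P.parts, l ≤ p.card}

noncomputable instance {l m : ℕ} {s : Finset α} : Fintype (Part l m s) := by
  unfold Part; classical infer_instance


def finsetOrderIso (e : α ≃ β) : Finset α ≃o Finset β where
  toEquiv := e.finsetCongr
  map_rel_iff' := by
    intro s t
    simp only [Equiv.finsetCongr_apply, le_eq_subset]
    exact Finset.map_subset_map

section PMap
variable [Fintype α] [Fintype β]

lemma univ_oiso (e : α ≃ β) : finsetOrderIso e (univ : Finset α) = univ :=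
  Finset.map_univ_equiv e

noncomputable def pmap (e : α ≃ β) (P : Finpartition (univ : Finset α)) :
    Finpartition (univ : Finset β) :=
  (P.map (finsetOrderIso e)).copy (univ_oiso e)

lemma mem_pmap {e : α ≃ β} {P : Finpartition (univ : Finset α)} {q : Finset β} :
    q ∈ (pmap e P).parts ↔ ∃ p ∈ P.parts, p.map e.toEmbedding = q := by
  simp only [pmap, Finpartition.copy_parts, Finpartition.parts_map, mem_map]
  rfl

lemma pmap_card {e : α ≃ β} {P : Finpartition (univ : Finset α)} :
    (pmap e P).parts.card = P.parts.card := Finset.card_map _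

lemma pmap_pmap (e : α ≃ β) (P : Finpartition (univ : Finset α)) :
    pmap e.symm (pmap e P) = P := by
  ext q
  simp only [mem_pmap]
  constructor
  · rintro ⟨p', ⟨p, hp, rfl⟩, rfl⟩
    have : (p.map e.toEmbedding).map e.symm.toEmbedding = p := by
      rw [Finset.map_map]; ext x; simp
    rwa [this]
  · intro hq
    exact ⟨q.map e.toEmbedding, ⟨q, hq, rfl⟩, by rw [Finset.map_map]; ext x; simp⟩

end PMap

def toSub {s : Finset α} (P : Finpartition s) : Finpartition (univ : Finset ↥s) where
  parts := P.parts.image fun p => p.subtype (· ∈ s)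
  supIndep := by
    rw [Finset.supIndep_iff_pairwiseDisjoint]
    intro q1 h1 q2 h2 hne
    simp only [coe_image, Set.mem_image, mem_coe] at h1 h2
    obtain ⟨p1, hp1, rfl⟩ := h1; obtain ⟨p2, hp2, rfl⟩ := h2
    have hp : p1 ≠ p2 := by rintro rfl; exact hne rfl
    have hd := P.disjoint hp1 hp2 hp
    simp only [Function.onFun, id_eq] at hd ⊢
    rw [Finset.disjoint_left] at hd ⊢
    intro x hx1 hx2
    rw [Finset.mem_subtype] at hx1 hx2
    exact hd hx1 hx2
  sup_parts := by
    ext x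
    simp only [mem_sup, mem_image, mem_univ, iff_true, id]
    obtain ⟨p, hp, hxp⟩ := P.exists_mem x.2
    exact ⟨p.subtype _, ⟨p, hp, rfl⟩, Finset.mem_subtype.2 hxp⟩
  bot_notMem := by
    simp only [bot_eq_empty, mem_image]
    rintro ⟨p, hp, h⟩
    obtain ⟨x, hx⟩ := P.nonempty_of_mem_parts hp
    have hm : (⟨x, P.le hp hx⟩ : ↥s) ∈ p.subtype (· ∈ s) := Finset.mem_subtype.2 hx
    rw [h] at hm; exact absurd hm (notMem_empty _)

lemma subtype_card {s p : Finset α} (h : p ⊆ s) : (p.subtype (· ∈ s)).card = p.card := by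
  rw [← Finset.card_map (Function.Embedding.subtype _), Finset.subtype_map,
    Finset.filter_true_of_mem fun x hx => h hx]

def ofSub {s : Finset α} (Q : Finpartition (univ : Finset ↥s)) : Finpartition s where
  parts := Q.parts.image fun q => q.map (Function.Embedding.subtype _)
  supIndep := by
    rw [Finset.supIndep_iff_pairwiseDisjoint]
    intro q1 h1 q2 h2 hne
    simp only [coe_image, Set.mem_image, mem_coe] at h1 h2
    obtain ⟨p1, hp1, rfl⟩ := h1; obtain ⟨p2, hp2, rfl⟩ := h2
    have hp : p1 ≠ p2 := by rintro rfl; exact hne rfl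
    have hd := Q.disjoint hp1 hp2 hp
    simp only [Function.onFun, id_eq] at hd ⊢
    exact (Finset.disjoint_map _).2 hd
  sup_parts := by
    ext x
    simp only [mem_sup, mem_image, id]
    constructor
    · rintro ⟨q', ⟨q, hq, rfl⟩, hx⟩
      obtain ⟨y, _, rfl⟩ := Finset.mem_map.1 hx
      exact y.2
    · intro hx
      obtain ⟨q, hq, hxq⟩ := Q.exists_mem (mem_univ (⟨x, hx⟩ : ↥s))
      exact ⟨q.map _, ⟨q, hq, rfl⟩, Finset.mem_map.2 ⟨⟨x, hx⟩, hxq, rfl⟩⟩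
  bot_notMem := by
    simp only [bot_eq_empty, mem_image]
    rintro ⟨q, hq, h⟩
    rw [Finset.map_eq_empty] at h
    exact Q.bot_notMem (by rw [bot_eq_empty, ← h]; exact hq)

lemma ofSub_toSub {s : Finset α} (P : Finpartition s) : ofSub (toSub P) = P := by
  ext p
  constructor
  · intro hp
    simp only [ofSub, toSub, mem_image, Finset.image_image] at hp
    obtain ⟨p', hp', rfl⟩ := hp
    have : (p'.subtype (· ∈ s)).map (Function.Embedding.subtype _) = p' := by
      rw [Finset.subtype_map, Finset.filter_true_of_mem fun x hx => P.le hp' hx]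
    simpa [Function.comp, this] using hp'
  · intro hp
    simp only [ofSub, toSub, Finset.image_image, mem_image, Function.comp]
    exact ⟨p, hp, by
      rw [Finset.subtype_map, Finset.filter_true_of_mem fun x hx => P.le hp hx]⟩

lemma toSub_ofSub {s : Finset α} (Q : Finpartition (univ : Finset ↥s)) : toSub (ofSub Q) = Q := by
  ext q
  have key : ∀ q' : Finset ↥s, (q'.map (Function.Embedding.subtype _)).subtype (· ∈ s) = q' := by
    intro q'; ext y
    simp only [Finset.mem_subtype, Finset.mem_map, Function.Embedding.coe_subtype]
    constructor
    · rintro ⟨z, hz, h⟩; rwa [Subtype.ext h] at hz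
    · intro hy; exact ⟨y, hy, rfl⟩
  simp only [toSub, ofSub, mem_image, Finset.image_image]
  constructor
  · rintro ⟨q', hq', rfl⟩
    simpa [Function.comp, key q'] using hq'
  · intro hq
    exact ⟨q, hq, key q⟩

lemma toSub_parts_card {s : Finset α} (P : Finpartition s) :
    (toSub P).parts.card = P.parts.card := by
  apply Finset.card_image_of_injOn
  intro p1 h1 p2 h2 h
  have := congrArg (Finset.map (Function.Embedding.subtype (· ∈ s))) h
  rwa [Finset.subtype_map, Finset.subtype_map,
    Finset.filter_true_of_mem fun x hx => P.le h1 hx,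
    Finset.filter_true_of_mem fun x hx => P.le h2 hx] at this


def partAttach {l m : ℕ} {s : Finset α} : Part l m s ≃ Part l m (univ : Finset ↥s) where
  toFun P := ⟨toSub P.1, by rw [toSub_parts_card]; exact P.2.1, by
    intro q hq
    simp only [toSub, mem_image] at hq
    obtain ⟨p, hp, rfl⟩ := hq
    rw [subtype_card (P.1.le hp)]
    exact P.2.2 p hp⟩
  invFun Q := ⟨ofSub Q.1, by
    constructor
    · have h := toSub_parts_card (ofSub Q.1)
      rw [toSub_ofSub] at h
      rw [← h]; exact Q.2.1
    · intro p hp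
      simp only [ofSub, mem_image] at hp
      obtain ⟨q, hq, rfl⟩ := hp
      rw [Finset.card_map]
      exact Q.2.2 q hq⟩
  left_inv P := Subtype.ext (ofSub_toSub P.1)
  right_inv Q := Subtype.ext (toSub_ofSub Q.1)



def dropPart {s : Finset α} (P : Finpartition s) {p : Finset α} (hp : p ∈ P.parts) :
    Finpartition (s \ p) :=
  P.ofSubset (fun x hx => Finset.mem_of_mem_erase hx : P.parts.erase p ⊆ P.parts)
    (by rw [Finset.erase_eq, sup_parts_sdiff P (Finset.singleton_subset_iff.2 hp),
          Finset.sup_singleton]; rfl)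

lemma dropPart_parts {s : Finset α} (P : Finpartition s) {p : Finset α} (hp : p ∈ P.parts) :
    (dropPart P hp).parts = P.parts.erase p := rfl

section Main
variable [Fintype α]

/-- subsets avoiding `a` of size `l-1`. -/
abbrev SFam (a : α) (l : ℕ) : Type _ := {S : Finset α // a ∉ S ∧ S.card = l - 1}

noncomputable def mainFwd (l m : ℕ) (a : α) (hl : 1 ≤ l) (P : Part l m (univ : Finset α)) :
    {q : Part l m ((univ : Finset α).erase a) × Finset α // q.2 ∈ q.1.1.parts} ⊕
      (Σ S : SFam a l, Part l (m - 1) ((univ : Finset α) \ insert a S.1)) :=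
  have hp : P.1.part a ∈ P.1.parts := P.1.part_mem.2 (mem_univ a)
  have ha : a ∈ P.1.part a := P.1.mem_part (mem_univ a)
  if h : l < (P.1.part a).card then
    Sum.inl ⟨(⟨(dropPart P.1 hp).extend
        (by
          intro hbot
          have hc := Finset.card_erase_of_mem ha
          rw [hbot] at hc
          simp only [bot_eq_empty, card_empty] at hc
          omega)
        (disjoint_of_subset_right (Finset.erase_subset _ _) sdiff_disjoint)
        (by
          ext x
          rw [sup_eq_union, Finset.mem_union, Finset.mem_sdiff, Finset.mem_erase,
            Finset.mem_erase]
          constructor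
          · rintro (⟨-, hxp⟩ | ⟨hxa, hxp⟩)
            · exact ⟨fun hxa => hxp (hxa ▸ ha), mem_univ x⟩
            · exact ⟨hxa, mem_univ x⟩
          · rintro ⟨hxa, -⟩
            by_cases hxp : x ∈ P.1.part a
            · exact Or.inr ⟨hxa, hxp⟩
            · exact Or.inl ⟨mem_univ x, hxp⟩),
      by
        constructor
        · rw [Finpartition.extend_parts, Finset.card_insert_of_notMem, dropPart_parts,
            Finset.card_erase_of_mem hp, P.2.1]
          · have hm : 1 ≤ m := P.2.1 ▸ Finset.card_pos.2 ⟨_, hp⟩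
            omega
          · rw [dropPart_parts]
            intro hmem
            have hq := Finset.mem_of_mem_erase hmem
            have hne : (P.1.part a).erase a ≠ P.1.part a := Finset.ne_of_mem_erase hmem
            have hdisj := P.1.disjoint hq hp hne
            simp only [Function.onFun, id_eq] at hdisj
            have hcard := Finset.card_erase_of_mem ha
            have hpos : 0 < ((P.1.part a).erase a).card := by omega
            obtain ⟨x, hx⟩ := Finset.card_pos.1 hpos
            exact (Finset.disjoint_left.1 hdisj hx) (Finset.mem_of_mem_erase hx)
        · intro q hq
          rw [Finpartition.extend_parts, Finset.mem_insert] at hq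
          rcases hq with rfl | hq
          · rw [Finset.card_erase_of_mem ha]; omega
          · exact P.2.2 q (Finset.mem_of_mem_erase hq)⟩,
      (P.1.part a).erase a), by
        simp only [Finpartition.extend_parts]
        exact Finset.mem_insert_self _ _⟩
  else
    Sum.inr ⟨⟨(P.1.part a).erase a, Finset.notMem_erase _ _,
        by rw [Finset.card_erase_of_mem ha, le_antisymm (not_lt.1 h) (P.2.2 _ hp)]⟩,
      ⟨(dropPart P.1 hp).copy (by rw [Finset.insert_erase ha]),
        by
          constructor
          · rw [Finpartition.copy_parts, dropPart_parts, Finset.card_erase_of_mem hp, P.2.1]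
          · intro q hq
            rw [Finpartition.copy_parts, dropPart_parts] at hq
            exact P.2.2 q (Finset.mem_of_mem_erase hq)⟩⟩

noncomputable def mainBwd (l m : ℕ) (a : α) (hl : 1 ≤ l) (hm : 1 ≤ m) :
    ({q : Part l m ((univ : Finset α).erase a) × Finset α // q.2 ∈ q.1.1.parts} ⊕
      (Σ S : SFam a l, Part l (m - 1) ((univ : Finset α) \ insert a S.1))) →
      Part l m (univ : Finset α)
  | Sum.inl ⟨(Q, p), hp⟩ =>
    have hap : a ∉ p := fun h => (Finset.mem_erase.1 (Q.1.le hp h)).1 rfl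
    ⟨(dropPart Q.1 hp).extend
      (Finset.insert_nonempty a p).ne_empty
      (by
        rw [Finset.disjoint_right]
        intro x hx hx2
        rw [Finset.mem_insert] at hx
        rw [Finset.mem_sdiff] at hx2
        rcases hx with rfl | hx
        · exact (Finset.mem_erase.1 hx2.1).1 rfl
        · exact hx2.2 hx)
      (by
        ext x
        rw [sup_eq_union, Finset.mem_union, Finset.mem_sdiff, Finset.mem_erase,
          Finset.mem_insert]
        constructor
        · intro _; exact mem_univ x
        · intro _
          by_cases hxa : x = a
          · exact Or.inr (Or.inl hxa)
          · by_cases hxp : x ∈ p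
            · exact Or.inr (Or.inr hxp)
            · exact Or.inl ⟨⟨hxa, mem_univ x⟩, hxp⟩),
      by
        have hnm : insert a p ∉ Q.1.parts.erase p := by
          intro hmem
          have hq := Finset.mem_of_mem_erase hmem
          exact (Finset.mem_erase.1 (Q.1.le hq (Finset.mem_insert_self a p))).1 rfl
        constructor
        · rw [Finpartition.extend_parts, Finset.card_insert_of_notMem, dropPart_parts,
            Finset.card_erase_of_mem hp, Q.2.1]
          · omega
          · rw [dropPart_parts]; exact hnm
        · intro q hq
          rw [Finpartition.extend_parts, Finset.mem_insert] at hq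
          rcases hq with rfl | hq
          · rw [Finset.card_insert_of_notMem hap]
            have := Q.2.2 p hp
            omega
          · exact Q.2.2 q (Finset.mem_of_mem_erase hq)⟩
  | Sum.inr ⟨S, R⟩ =>
    ⟨R.1.extend
      (Finset.insert_nonempty a S.1).ne_empty
      sdiff_disjoint
      (by rw [sup_eq_union, Finset.sdiff_union_of_subset (Finset.subset_univ _)]),
      by
        have hnm : insert a S.1 ∉ R.1.parts := by
          intro hmem
          have := R.1.le hmem (Finset.mem_insert_self a S.1)
          rw [Finset.mem_sdiff] at this
          exact this.2 (Finset.mem_insert_self a S.1)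
        constructor
        · rw [Finpartition.extend_parts, Finset.card_insert_of_notMem hnm, R.2.1]
          omega
        · intro q hq
          rw [Finpartition.extend_parts, Finset.mem_insert] at hq
          rcases hq with rfl | hq
          · rw [Finset.card_insert_of_notMem S.2.1, S.2.2]
            omega
          · exact R.2.2 q hq⟩

end Main

section Main2
variable {α : Type*} [DecidableEq α] [Fintype α]

lemma sigma_part_ext {ι : Type*} {g : ι → Finset α} {l' m' : ℕ} {i j : ι} (h : i = j)
    {R : Part l' m' (g i)} {R' : Part l' m' (g j)} (hp : R.1.parts = R'.1.parts) :
    (⟨i, R⟩ : Σ i, Part l' m' (g i)) = ⟨j, R'⟩ := by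
  subst h
  exact congrArg _ (Subtype.ext (Finpartition.ext hp))

noncomputable def mainEquiv (l m : ℕ) (a : α) (hl : 1 ≤ l) (hm : 1 ≤ m) :
    Part l m (univ : Finset α) ≃
      ({q : Part l m ((univ : Finset α).erase a) × Finset α // q.2 ∈ q.1.1.parts} ⊕
        (Σ S : SFam a l, Part l (m - 1) ((univ : Finset α) \ insert a S.1))) where
  toFun := mainFwd l m a hl
  invFun := mainBwd l m a hl hm
  left_inv := by
    intro P
    have hp : P.1.part a ∈ P.1.parts := P.1.part_mem.2 (mem_univ a)
    have ha : a ∈ P.1.part a := P.1.mem_part (mem_univ a)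
    by_cases h : l < (P.1.part a).card
    · simp only [mainFwd, dif_pos h, mainBwd]
      apply Subtype.ext
      apply Finpartition.ext
      have hne : (P.1.part a).erase a ∉ P.1.parts.erase (P.1.part a) := by
        intro hmem
        have hq := Finset.mem_of_mem_erase hmem
        have hne2 : (P.1.part a).erase a ≠ P.1.part a := Finset.ne_of_mem_erase hmem
        have hdisj := P.1.disjoint hq hp hne2
        simp only [Function.onFun, id_eq] at hdisj
        have hcard := Finset.card_erase_of_mem ha
        have hpos : 0 < ((P.1.part a).erase a).card := by omega
        obtain ⟨x, hx⟩ := Finset.card_pos.1 hpos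
        exact (Finset.disjoint_left.1 hdisj hx) (Finset.mem_of_mem_erase hx)
      show insert (insert a ((P.1.part a).erase a))
          (((dropPart P.1 hp).extend _ _ _).parts.erase ((P.1.part a).erase a)) = P.1.parts
      rw [Finpartition.extend_parts, dropPart_parts, Finset.erase_insert hne,
        Finset.insert_erase ha, Finset.insert_erase hp]
    · simp only [mainFwd, dif_neg h, mainBwd]
      apply Subtype.ext
      apply Finpartition.ext
      show insert (insert a ((P.1.part a).erase a))
          (((dropPart P.1 hp).copy _).parts) = P.1.parts
      rw [Finpartition.copy_parts, dropPart_parts, Finset.insert_erase ha,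
        Finset.insert_erase hp]
  right_inv := by
    rintro (⟨⟨Q, p⟩, hp⟩ | ⟨S, R⟩)
    · have hap : a ∉ p := fun hh => (Finset.mem_erase.1 (Q.1.le hp hh)).1 rfl
      simp only [mainBwd]
      set P' : Finpartition (univ : Finset α) := (dropPart Q.1 hp).extend _ _ _ with hP'
      have hmem : insert a p ∈ P'.parts := by
        rw [hP', Finpartition.extend_parts]
        exact Finset.mem_insert_self _ _
      have hpart : P'.part a = insert a p :=
        P'.part_eq_of_mem hmem (Finset.mem_insert_self a p)
      have hcond : l < (P'.part a).card := by
        rw [hpart, Finset.card_insert_of_notMem hap]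
        exact lt_of_le_of_lt (Q.2.2 p hp) (Nat.lt_succ_self _)
      simp only [mainFwd]
      rw [dif_pos hcond]
      refine congrArg Sum.inl (Subtype.ext (Prod.ext ?_ ?_))
      · apply Subtype.ext
        apply Finpartition.ext
        have hnm : insert a p ∉ Q.1.parts.erase p := by
          intro hmem2
          exact (Finset.mem_erase.1
            (Q.1.le (Finset.mem_of_mem_erase hmem2) (Finset.mem_insert_self a p))).1 rfl
        show insert ((P'.part a).erase a) ((dropPart P' (P'.part_mem.2 (mem_univ a))).parts)
            = Q.1.parts
        rw [dropPart_parts, hpart, Finset.erase_insert hap, hP', Finpartition.extend_parts,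
          dropPart_parts, Finset.erase_insert hnm, Finset.insert_erase hp]
      · show (P'.part a).erase a = p
        rw [hpart, Finset.erase_insert hap]
    · simp only [mainBwd]
      set P' : Finpartition (univ : Finset α) := R.1.extend _ _ _ with hP'
      have hmem : insert a S.1 ∈ P'.parts := by
        rw [hP', Finpartition.extend_parts]
        exact Finset.mem_insert_self _ _
      have hpart : P'.part a = insert a S.1 :=
        P'.part_eq_of_mem hmem (Finset.mem_insert_self a S.1)
      have hcond : ¬ l < (P'.part a).card := by
        rw [hpart, Finset.card_insert_of_notMem S.2.1, S.2.2]
        omega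
      simp only [mainFwd]
      rw [dif_neg hcond]
      refine congrArg Sum.inr (sigma_part_ext (g := fun S : SFam a l => (univ : Finset α) \ insert a S.1) (Subtype.ext ?_) ?_)
      · show (P'.part a).erase a = S.1
        rw [hpart, Finset.erase_insert S.2.1]
      · have hnm : insert a S.1 ∉ R.1.parts := by
          intro hmem2
          have h2 := R.1.le hmem2 (Finset.mem_insert_self a S.1)
          rw [Finset.mem_sdiff] at h2
          exact h2.2 (Finset.mem_insert_self a S.1)
        show ((dropPart P' (P'.part_mem.2 (mem_univ a))).parts) = R.1.parts
        rw [dropPart_parts, hpart, hP', Finpartition.extend_parts, Finset.erase_insert hnm]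

end Main2


section Counting
variable {α β : Type*} [DecidableEq α] [DecidableEq β]

noncomputable def partUnivCongr {l m : ℕ} [Fintype α] [Fintype β] (e : α ≃ β) :
    Part l m (univ : Finset α) ≃ Part l m (univ : Finset β) where
  toFun P := ⟨pmap e P.1, by rw [pmap_card]; exact P.2.1, by
    intro q hq
    rw [mem_pmap] at hq
    obtain ⟨p, hp, rfl⟩ := hq
    rw [Finset.card_map]
    exact P.2.2 p hp⟩
  invFun Q := ⟨pmap e.symm Q.1, by rw [pmap_card]; exact Q.2.1, by
    intro q hq
    rw [mem_pmap] at hq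
    obtain ⟨p, hp, rfl⟩ := hq
    rw [Finset.card_map]
    exact Q.2.2 p hp⟩
  left_inv P := Subtype.ext (pmap_pmap e P.1)
  right_inv Q := Subtype.ext (by
    have h := pmap_pmap e.symm Q.1
    rwa [Equiv.symm_symm] at h)

noncomputable def partCongr {l m : ℕ} {s : Finset α} {t : Finset β} (e : ↥s ≃ ↥t) :
    Part l m s ≃ Part l m t :=
  partAttach.trans (((partUnivCongr (α := ↥s) (β := ↥t) e)).trans partAttach.symm)

noncomputable def Nfn (l m q : ℕ) : ℕ := Nat.card (Part l m (univ : Finset (Fin q)))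

lemma card_part {l m : ℕ} (s : Finset α) : Nat.card (Part l m s) = Nfn l m s.card :=
  Nat.card_congr (partCongr (s.equivFin.trans (Equiv.subtypeUnivEquiv fun x => mem_univ x).symm))

lemma N_eq_zero {l m q : ℕ} (hm : 1 ≤ m) (h : q < l) : Nfn l m q = 0 := by
  rw [Nfn, Nat.card_eq_zero]
  refine Or.inl ⟨fun P => ?_⟩
  have hne : P.1.parts.Nonempty := Finset.card_pos.1 (by rw [P.2.1]; omega)
  obtain ⟨p, hp⟩ := hne
  have h1 := P.2.2 p hp
  have h2 : p.card ≤ q := by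
    have h3 := Finset.card_le_card (P.1.le hp)
    simpa using h3
  omega

lemma N_rec {l m n : ℕ} (hl : 1 ≤ l) (hm : 1 ≤ m) (hn : 1 ≤ n) :
    Nfn l m n = m * Nfn l m (n - 1) + (n - 1).choose (l - 1) * Nfn l (m - 1) (n - l) := by
  classical
  by_cases hln : n < l
  · rw [N_eq_zero hm hln, N_eq_zero hm (by omega : n - 1 < l),
      Nat.choose_eq_zero_of_lt (by omega), Nat.mul_zero, Nat.zero_mul, Nat.add_zero]
  push_neg at hln
  set a : Fin n := ⟨0, hn⟩
  have key := Nat.card_congr (mainEquiv l m a hl hm)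
  have hcoe : Nat.card (Part l m (univ : Finset (Fin n))) = Nfn l m n := rfl
  have herase : ((univ : Finset (Fin n)).erase a).card = n - 1 := by
    rw [Finset.card_erase_of_mem (mem_univ a), Finset.card_univ, Fintype.card_fin]
  have hX : Nat.card {q : Part l m ((univ : Finset (Fin n)).erase a) × Finset (Fin n) //
      q.2 ∈ q.1.1.parts} = m * Nfn l m (n - 1) := by
    rw [Nat.card_congr (Equiv.subtypeProdEquivSigmaSubtype
      (fun (Q : Part l m ((univ : Finset (Fin n)).erase a)) (p : Finset (Fin n)) =>
        p ∈ Q.1.parts))]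
    rw [Nat.card_eq_fintype_card, Fintype.card_sigma]
    have hfib : ∀ Q : Part l m ((univ : Finset (Fin n)).erase a),
        Fintype.card {p // p ∈ Q.1.parts} = m := by
      intro Q
      rw [Fintype.card_coe]
      exact Q.2.1
    rw [Finset.sum_congr rfl fun Q _ => hfib Q, Finset.sum_const, smul_eq_mul,
      Finset.card_univ, ← Nat.card_eq_fintype_card, card_part, herase, Nat.mul_comm]
  have hY : Nat.card (Σ S : SFam a l, Part l (m - 1) ((univ : Finset (Fin n)) \ insert a S.1))
      = (n - 1).choose (l - 1) * Nfn l (m - 1) (n - l) := by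
    rw [Nat.card_eq_fintype_card, Fintype.card_sigma]
    have hfib : ∀ S : SFam a l,
        Fintype.card (Part l (m - 1) ((univ : Finset (Fin n)) \ insert a S.1))
          = Nfn l (m - 1) (n - l) := by
      intro S
      rw [← Nat.card_eq_fintype_card, card_part]
      congr 1
      rw [Finset.card_sdiff_of_subset (Finset.subset_univ _), Finset.card_insert_of_notMem S.2.1,
        S.2.2, Finset.card_univ, Fintype.card_fin]
      omega
    rw [Finset.sum_congr rfl fun S _ => hfib S, Finset.sum_const, smul_eq_mul,
      Finset.card_univ]
    congr 1
    have : Fintype.card (SFam a l) =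
        (Finset.powersetCard (l - 1) ((univ : Finset (Fin n)).erase a)).card := by
      rw [Fintype.card_subtype]
      congr 1
      ext S
      simp only [Finset.mem_filter, Finset.mem_univ, true_and, Finset.mem_powersetCard,
        Finset.subset_erase, Finset.subset_univ, true_and]
    rw [this, Finset.card_powersetCard, herase]
  rw [← hcoe, key, Nat.card_eq_fintype_card, Fintype.card_sum,
    ← Nat.card_eq_fintype_card, ← Nat.card_eq_fintype_card, hX, hY]

end Counting

section MixedEquiv

noncomputable def mixedEquiv (n k r l : ℕ) :
    {x : Σ B : Fin (k - 1) → Finset (Fin n),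
        Finpartition ((Finset.univ : Finset (Fin n)) \ Finset.univ.biUnion B) //
      (∀ i, (x.1 i).Nonempty) ∧ (∀ i, l ≤ (x.1 i).card) ∧
      (∀ i j, i ≠ j → Disjoint (x.1 i) (x.1 j)) ∧
      x.2.parts.card = r ∧ ∀ p ∈ x.2.parts, l ≤ p.card} ≃
    {q : Part l (k - 1 + r) (univ : Finset (Fin n)) × (Fin (k - 1) → Finset (Fin n)) //
      (∀ i, q.2 i ∈ q.1.1.parts) ∧ Function.Injective q.2} where
  toFun x := by
    obtain ⟨⟨B, π⟩, h1, h2, h3, h4, h5⟩ := x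
    dsimp only at h1 h2 h3 h4 h5
    have hBinj : Function.Injective B := by
      intro i j hij
      by_contra hne
      obtain ⟨y, hy⟩ := h1 i
      exact Finset.disjoint_left.1 (h3 i j hne) hy (hij ▸ hy)
    have hπB : ∀ q ∈ π.parts, ∀ i, Disjoint q (B i) := by
      intro q hq i
      rw [Finset.disjoint_left]
      intro y hy hyB
      have h6 := π.le hq hy
      rw [Finset.mem_sdiff] at h6
      exact h6.2 (Finset.mem_biUnion.2 ⟨i, mem_univ i, hyB⟩)
    have hdisjsets : Disjoint π.parts (Finset.univ.image B) := by
      rw [Finset.disjoint_left]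
      intro q hq hqB
      obtain ⟨i, -, rfl⟩ := Finset.mem_image.1 hqB
      obtain ⟨y, hy⟩ := h1 i
      exact Finset.disjoint_left.1 (hπB _ hq i) hy hy
    refine ⟨(⟨⟨π.parts ∪ Finset.univ.image B, ?_, ?_, ?_⟩, ?_, ?_⟩, B), fun i => ?_, hBinj⟩
    · rw [Finset.supIndep_iff_pairwiseDisjoint]
      intro q1 hq1 q2 hq2 hne
      simp only [Finset.coe_union, Set.mem_union, Finset.mem_coe, Finset.coe_image,
        Set.mem_image, Set.mem_setOf_eq, Finset.mem_coe] at hq1 hq2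
      simp only [Function.onFun, id_eq]
      rcases hq1 with hq1 | hq1
      · rcases hq2 with hq2 | hq2
        · exact π.disjoint hq1 hq2 hne
        · obtain ⟨i, -, rfl⟩ := hq2
          exact hπB _ hq1 i
      · obtain ⟨i, -, rfl⟩ := hq1
        rcases hq2 with hq2 | hq2
        · exact (hπB _ hq2 i).symm
        · obtain ⟨j, -, rfl⟩ := hq2
          exact h3 i j fun hij => hne (hij ▸ rfl)
    · ext y
      simp only [Finset.sup_union, sup_eq_union, Finset.mem_union, mem_univ, iff_true]
      by_cases hy : y ∈ Finset.univ.biUnion B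
      · obtain ⟨i, -, hyi⟩ := Finset.mem_biUnion.1 hy
        refine Or.inr ?_
        rw [Finset.mem_sup]
        exact ⟨B i, Finset.mem_image_of_mem B (mem_univ i), hyi⟩
      · refine Or.inl ?_
        rw [Finset.mem_sup]
        obtain ⟨p, hp, hyp⟩ := π.exists_mem (Finset.mem_sdiff.2 ⟨mem_univ y, hy⟩)
        exact ⟨p, hp, hyp⟩
    · rw [Finset.mem_union]
      rintro (hbot | hbot)
      · exact π.bot_notMem hbot
      · obtain ⟨i, -, hi⟩ := Finset.mem_image.1 hbot
        obtain ⟨y, hy⟩ := h1 i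
        rw [hi] at hy
        exact Finset.notMem_empty y hy
    · rw [Finset.card_union_of_disjoint hdisjsets, h4,
        Finset.card_image_of_injective _ hBinj, Finset.card_univ, Fintype.card_fin]
      omega
    · intro p hp
      rw [Finset.mem_union] at hp
      rcases hp with hp | hp
      · exact h5 p hp
      · obtain ⟨i, -, rfl⟩ := Finset.mem_image.1 hp
        exact h2 i
    · exact Finset.mem_union_right _ (Finset.mem_image_of_mem B (mem_univ i))
  invFun y := by
    obtain ⟨⟨P, f⟩, hf, hinj⟩ := y
    have himg : Finset.univ.image f ⊆ P.1.parts :=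
      Finset.image_subset_iff.2 fun i _ => hf i
    refine ⟨⟨f, P.1.ofSubset (Finset.sdiff_subset : P.1.parts \ Finset.univ.image f ⊆ _) ?_⟩,
      fun i => P.1.nonempty_of_mem_parts (hf i), fun i => P.2.2 _ (hf i),
      fun i j hij => P.1.disjoint (hf i) (hf j) (fun h => hij (hinj h)), ?_, ?_⟩
    · rw [sup_parts_sdiff P.1 himg, Finset.sup_image, Function.id_comp,
        ← Finset.sup_eq_biUnion]
    · show (P.1.parts \ Finset.univ.image f).card = r
      rw [Finset.card_sdiff_of_subset himg, Finset.card_image_of_injective _ hinj, Finset.card_univ,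
        Fintype.card_fin, P.2.1]
      omega
    · intro p hp
      exact P.2.2 p (Finset.mem_sdiff.1 hp).1
  left_inv := by
    rintro ⟨⟨B, π⟩, h1, h2, h3, h4, h5⟩
    apply Subtype.ext
    refine congrArg (Sigma.mk B) (Finpartition.ext ?_)
    show (π.parts ∪ Finset.univ.image B) \ Finset.univ.image B = π.parts
    rw [Finset.union_sdiff_right, Finset.sdiff_eq_self_iff_disjoint]
    rw [Finset.disjoint_left]
    intro q hq hqB
    obtain ⟨i, -, rfl⟩ := Finset.mem_image.1 hqB
    obtain ⟨y, hy⟩ := π.nonempty_of_mem_parts hq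
    have h6 := π.le hq hy
    rw [Finset.mem_sdiff] at h6
    exact h6.2 (Finset.mem_biUnion.2 ⟨i, mem_univ i, hy⟩)
  right_inv := by
    rintro ⟨⟨P, f⟩, hf, hinj⟩
    apply Subtype.ext
    refine Prod.ext (Subtype.ext (Finpartition.ext ?_)) rfl
    show (P.1.parts \ Finset.univ.image f) ∪ Finset.univ.image f = P.1.parts
    exact Finset.sdiff_union_of_subset (Finset.image_subset_iff.2 fun i _ => hf i)

end MixedEquiv

def injFunEquiv {γ : Type*} {c : ℕ} (t : Finset γ) :
    {f : Fin c → γ // (∀ i, f i ∈ t) ∧ Function.Injective f} ≃ (Fin c ↪ {x // x ∈ t}) where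
  toFun F := ⟨fun i => ⟨F.1 i, F.2.1 i⟩, fun i j h => F.2.2 (congrArg Subtype.val h)⟩
  invFun g := ⟨fun i => (g i).1, fun i => (g i).2, fun i j h => g.injective (Subtype.ext h)⟩
  left_inv F := rfl
  right_inv g := rfl

end MixedAux

lemma MixedAux.mixed_eq (n k r l : ℕ) :
    mixedStirlingGe l n k r =
      (k - 1 + r).descFactorial (k - 1) * MixedAux.Nfn l (k - 1 + r) n := by
  classical
  have E := (MixedAux.mixedEquiv n k r l).trans
    ((Equiv.subtypeProdEquivSigmaSubtype
      (fun (P : MixedAux.Part l (k - 1 + r) (Finset.univ : Finset (Fin n)))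
        (f : Fin (k - 1) → Finset (Fin n)) =>
        (∀ i, f i ∈ P.1.parts) ∧ Function.Injective f)).trans
      (Equiv.sigmaCongrRight fun P => MixedAux.injFunEquiv P.1.parts))
  rw [mixedStirlingGe, Nat.card_congr E, Nat.card_eq_fintype_card, Fintype.card_sigma]
  have hfib : ∀ P : MixedAux.Part l (k - 1 + r) (Finset.univ : Finset (Fin n)),
      Fintype.card (Fin (k - 1) ↪ {p // p ∈ P.1.parts}) =
        (k - 1 + r).descFactorial (k - 1) := by
    intro P
    rw [Fintype.card_embedding_eq, Fintype.card_coe, P.2.1, Fintype.card_fin]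
  rw [Finset.sum_congr rfl fun P _ => hfib P, Finset.sum_const, smul_eq_mul,
    Finset.card_univ, ← Nat.card_eq_fintype_card, Nat.mul_comm]
  rfl

theorem mixedStirlingGe_recurrence' (n k r l : ℕ)
    (hn : 1 ≤ n) (hk : 1 ≤ k) (hr : 1 ≤ r) (hl : 1 ≤ l) :
    mixedStirlingGe l n k r =
      (k + r - 1) * mixedStirlingGe l (n - 1) k r +
        (n - 1).choose (l - 1) *
          ((k - 1) * mixedStirlingGe l (n - l) (k - 1) r +
            mixedStirlingGe l (n - l) k (r - 1)) := by
  have hm : 1 ≤ k - 1 + r := by omega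
  set m := k - 1 + r with hmdef
  have h1 : k - 1 + (r - 1) = m - 1 := by omega
  have hkr : k + r - 1 = m := by omega
  rw [MixedAux.mixed_eq n k r l, MixedAux.mixed_eq (n - 1) k r l,
    MixedAux.mixed_eq (n - l) k (r - 1) l, MixedAux.N_rec hl hm hn, h1, hkr]
  rcases Nat.lt_or_ge k 2 with hk2 | hk2
  · have hk1 : k = 1 := by omega
    subst hk1
    simp only [Nat.sub_self, Nat.descFactorial_zero, Nat.one_mul, Nat.zero_mul,
      Nat.mul_one, Nat.zero_add]
    rw [hmdef, Nat.sub_self, Nat.zero_add]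
  · rw [MixedAux.mixed_eq (n - l) (k - 1) r l]
    have h2 : k - 1 - 1 + r = m - 1 := by omega
    rw [h2]
    have hk' : k - 2 + 1 = k - 1 := by omega
    have hm' : m - 1 + 1 = m := by omega
    have h3 : k - 1 - 1 = k - 2 := by omega
    rw [h3]
    have hd3 : m.descFactorial (k - 1) =
        (k - 1) * (m - 1).descFactorial (k - 2) + (m - 1).descFactorial (k - 1) := by
      have hd1 : m.descFactorial (k - 1) = m * (m - 1).descFactorial (k - 2) := by
        rw [← hm', ← hk', Nat.succ_descFactorial_succ, hm']
      have hd2 : (m - 1).descFactorial (k - 1) =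
          (m - 1 - (k - 2)) * (m - 1).descFactorial (k - 2) := by
        rw [← hk', Nat.descFactorial_succ]
      by_cases hle : k - 2 ≤ m - 1
      · rw [hd1, hd2, ← Nat.add_mul]
        congr 1
        omega
      · have hz : (m - 1).descFactorial (k - 2) = 0 :=
          Nat.descFactorial_eq_zero_iff_lt.2 (by omega)
        rw [hd1, hd2, hz]
        ring
    rw [hd3]
    ring
end

section
/- Let k ≥ 1 and let c_1,…,c_k be nonnegative integers. Then, as an identity of formal power series over ℚ, Σ_{n≥0} {B brace C} · x^n/n! = (exp(x) − 1)^{c_1+c_2+⋯+c_k} / (c_1!·c_2!⋯c_k!), where {B brace C} is the mixed partition number for the n-element ground set {1,…,n} and exp(x) denotes the formal exponential power series Σ_{n≥0} x^n/n!. -/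
open Finset

namespace MixedPartAux

/-! ### Setup -/

variable {n k : ℕ} {c : Fin k → ℕ}

/-- The structure type underlying `mixedPart`. -/
abbrev Struct (n k : ℕ) (c : Fin k → ℕ) :=
  {x : Σ A : Fin k → Finset (Fin n), ∀ i, Finpartition (A i) //
    (∀ i j, i ≠ j → Disjoint (x.1 i) (x.1 j)) ∧
    Finset.univ.biUnion x.1 = Finset.univ ∧
    ∀ i, (x.2 i).parts.card = c i}

/-- The label type: `c i` cells with label `i`. -/
abbrev M (k : ℕ) (c : Fin k → ℕ) := Σ i : Fin k, Fin (c i)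

/-- The fiber of `f` over a label. -/
def fiber (f : Fin n → M k c) (p : M k c) : Finset (Fin n) :=
  univ.filter fun a => f a = p

lemma mem_fiber {f : Fin n → M k c} {p : M k c} {a : Fin n} :
    a ∈ fiber f p ↔ f a = p := by simp [fiber]

instance finpartitionFinite {α : Type*} [Lattice α] [OrderBot α] (a : α) [Finite α] :
    Finite (Finpartition a) := by
  letI := Fintype.ofFinite α
  letI := Classical.decEq α
  exact Finite.of_injective Finpartition.parts fun _ _ h => Finpartition.ext h

lemma struct_ext (x y : Struct n k c) (hA : x.1.1 = y.1.1)
    (hP : ∀ i, (x.1.2 i).parts = (y.1.2 i).parts) : x = y := by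
  obtain ⟨⟨A, P⟩, hx⟩ := x
  obtain ⟨⟨A', P'⟩, hy⟩ := y
  simp only at hA
  subst hA
  apply Subtype.ext
  show (⟨A, P⟩ : Σ A : Fin k → Finset (Fin n), ∀ i, Finpartition (A i)) = ⟨A, P'⟩
  rw [Sigma.mk.inj_iff]
  exact ⟨rfl, heq_of_eq (funext fun i => Finpartition.ext (hP i))⟩

lemma parts_congr {x y : Struct n k c} (h : x = y) (i : Fin k) :
    (x.1.2 i).parts = (y.1.2 i).parts := by subst h; rfl

lemma A_congr {x y : Struct n k c} (h : x = y) : x.1.1 = y.1.1 := by subst h; rfl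

/-! ### The map from surjections to structures -/

/-- The partition of `{a | (f a).1 = i}` into fibers. -/
def PhiPart (f : Fin n → M k c) (hf : Function.Surjective f) (i : Fin k) :
    Finpartition (univ.filter fun a => (f a).1 = i) where
  parts := (univ : Finset (Fin (c i))).image fun j => fiber f ⟨i, j⟩
  supIndep := by
    rw [Finset.supIndep_iff_pairwiseDisjoint]
    rintro t ht u hu htu
    simp only [coe_image, Set.mem_image, mem_coe, coe_univ, Set.mem_univ, true_and] at ht hu
    obtain ⟨j, rfl⟩ := ht
    obtain ⟨j', rfl⟩ := hu
    simp only [Function.onFun, id]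
    rw [Finset.disjoint_left]
    intro a ha ha'
    rw [mem_fiber] at ha ha'
    exact htu (by rw [← ha, ha'])
  sup_parts := by
    ext a
    rw [Finset.sup_image, Finset.mem_sup]
    simp only [Function.comp, id, mem_univ, true_and, mem_filter, mem_fiber]
    constructor
    · rintro ⟨j, hj⟩
      rw [hj]
    · intro h
      rcases hfa : f a with ⟨i', j⟩
      rw [hfa] at h
      have h2 : i' = i := h
      subst h2
      exact ⟨j, rfl⟩
  bot_notMem := by
    simp only [Finset.bot_eq_empty, mem_image, mem_univ, true_and, not_exists]
    intro j h
    obtain ⟨a, ha⟩ := hf ⟨i, j⟩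
    have : a ∈ fiber f ⟨i, j⟩ := mem_fiber.2 ha
    rw [h] at this
    exact absurd this (Finset.notMem_empty a)

lemma PhiPart_parts_card (f : Fin n → M k c) (hf : Function.Surjective f) (i : Fin k) :
    (PhiPart f hf i).parts.card = c i := by
  show ((univ : Finset (Fin (c i))).image fun j => fiber f ⟨i, j⟩).card = c i
  rw [Finset.card_image_of_injective _ ?_, Finset.card_univ, Fintype.card_fin]
  intro j j' h
  obtain ⟨a, ha⟩ := hf ⟨i, j⟩
  have h1 : a ∈ fiber f ⟨i, j⟩ := mem_fiber.2 ha
  have h' : fiber f ⟨i, j⟩ = fiber f ⟨i, j'⟩ := h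
  rw [h'] at h1
  rw [mem_fiber, ha] at h1
  exact ((Sigma.mk.inj_iff.1 h1.symm).2.eq).symm

/-- The map from surjections to structures. -/
def Phi (f : {f : Fin n → M k c // Function.Surjective f}) : Struct n k c :=
  ⟨⟨fun i => univ.filter fun a => (f.1 a).1 = i, fun i => PhiPart f.1 f.2 i⟩, by
    intro i j hij
    rw [Finset.disjoint_left]
    intro a ha ha'
    rw [mem_filter] at ha ha'
    exact hij (ha.2 ▸ ha'.2.symm ▸ rfl), by
    ext a
    simp only [mem_biUnion, mem_univ, true_and, mem_filter, iff_true]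
    exact ⟨(f.1 a).1, rfl⟩, fun i => PhiPart_parts_card f.1 f.2 i⟩

lemma Phi_parts (f : {f : Fin n → M k c // Function.Surjective f}) (i : Fin k) :
    ((Phi f).1.2 i).parts = (univ : Finset (Fin (c i))).image fun j => fiber f.1 ⟨i, j⟩ := rfl

lemma Phi_A (f : {f : Fin n → M k c // Function.Surjective f}) (i : Fin k) :
    (Phi f).1.1 i = univ.filter fun a => (f.1 a).1 = i := rfl

/-! ### From structures and labelings of blocks back to surjections -/

variable (x : Struct n k c)

lemma exists_unique_col (a : Fin n) : ∃! i, a ∈ x.1.1 i := by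
  have h : a ∈ univ.biUnion x.1.1 := by rw [x.2.2.1]; exact mem_univ a
  rw [mem_biUnion] at h
  obtain ⟨i, -, hi⟩ := h
  refine ⟨i, hi, fun j hj => ?_⟩
  by_contra hne
  exact Finset.disjoint_left.1 (x.2.1 j i hne) hj hi

/-- The label of the set containing `a`. -/
noncomputable def col (a : Fin n) : Fin k :=
  Fintype.choose (fun i => a ∈ x.1.1 i) (exists_unique_col x a)

lemma mem_col (a : Fin n) : a ∈ x.1.1 (col x a) :=
  Fintype.choose_spec (fun i => a ∈ x.1.1 i) (exists_unique_col x a)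

lemma col_eq {a : Fin n} {i : Fin k} (h : a ∈ x.1.1 i) : col x a = i :=
  (exists_unique_col x a).unique (mem_col x a) h

/-- Reconstruct a surjection from a structure plus labelings of its blocks. -/
noncomputable def g (E : ∀ i, Fin (c i) ≃ {t // t ∈ (x.1.2 i).parts}) (a : Fin n) : M k c :=
  ⟨col x a, (E (col x a)).symm
    ⟨(x.1.2 (col x a)).part a, (Finpartition.part_mem _).2 (mem_col x a)⟩⟩

lemma g_eq (E : ∀ i, Fin (c i) ≃ {t // t ∈ (x.1.2 i).parts}) {a : Fin n} {i : Fin k}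
    (h : col x a = i) (hmem : a ∈ x.1.1 i) :
    g x E a = ⟨i, (E i).symm
      ⟨(x.1.2 i).part a, (Finpartition.part_mem _).2 hmem⟩⟩ := by
  subst h; rfl

lemma fiber_g (E : ∀ i, Fin (c i) ≃ {t // t ∈ (x.1.2 i).parts}) (i : Fin k) (j : Fin (c i)) :
    fiber (g x E) ⟨i, j⟩ = (E i j).1 := by
  ext a
  rw [mem_fiber]
  constructor
  · intro h
    have hcol : col x a = i := congrArg Sigma.fst h
    have hmem : a ∈ x.1.1 i := by rw [← hcol]; exact mem_col x a
    rw [g_eq x E hcol hmem] at h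
    have h2 := (Sigma.mk.inj_iff.1 h).2.eq
    rw [Equiv.symm_apply_eq] at h2
    have h3 : (x.1.2 i).part a = (E i j).1 := congrArg Subtype.val h2
    exact h3 ▸ (Finpartition.mem_part_self _).2 hmem
  · intro ha
    have hAi : a ∈ x.1.1 i := (x.1.2 i).le (E i j).2 ha
    rw [g_eq x E (col_eq x hAi) hAi]
    refine congrArg (Sigma.mk i) ?_
    rw [Equiv.symm_apply_eq]
    exact Subtype.ext (Finpartition.part_eq_of_mem _ (E i j).2 ha)

lemma g_surj (E : ∀ i, Fin (c i) ≃ {t // t ∈ (x.1.2 i).parts}) :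
    Function.Surjective (g x E) := by
  rintro ⟨i, j⟩
  obtain ⟨a, ha⟩ := Finpartition.nonempty_of_mem_parts _ (E i j).2
  exact ⟨a, mem_fiber.1 (by rw [fiber_g]; exact ha)⟩

lemma Phi_g (E : ∀ i, Fin (c i) ≃ {t // t ∈ (x.1.2 i).parts}) :
    Phi ⟨g x E, g_surj x E⟩ = x := by
  apply struct_ext
  · funext i
    ext a
    rw [Phi_A]
    simp only [mem_filter, mem_univ, true_and]
    constructor
    · intro h
      rw [← h]
      exact mem_col x a
    · intro h
      exact col_eq x h
  · intro i
    rw [Phi_parts]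
    ext t
    simp only [mem_image, mem_univ, true_and]
    constructor
    · rintro ⟨j, rfl⟩
      rw [fiber_g]
      exact (E i j).2
    · intro ht
      refine ⟨(E i).symm ⟨t, ht⟩, ?_⟩
      rw [fiber_g]
      simp
  
/-- The labelings of blocks associated to a surjection mapping to `x`. -/
noncomputable def EofF (f : Fin n → M k c) (hf : Function.Surjective f)
    (hPhi : Phi ⟨f, hf⟩ = x) (i : Fin k) : Fin (c i) ≃ {t // t ∈ (x.1.2 i).parts} :=
  Equiv.ofBijective
    (fun j => ⟨fiber f ⟨i, j⟩, by
      rw [← parts_congr hPhi i, Phi_parts]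
      exact mem_image_of_mem _ (mem_univ j)⟩)
    (by
      constructor
      · intro j j' h
        have h' : fiber f ⟨i, j⟩ = fiber f ⟨i, j'⟩ := congrArg Subtype.val h
        obtain ⟨a, ha⟩ := hf ⟨i, j⟩
        have h1 : a ∈ fiber f ⟨i, j⟩ := mem_fiber.2 ha
        rw [h'] at h1
        rw [mem_fiber, ha] at h1
        exact ((Sigma.mk.inj_iff.1 h1.symm).2.eq).symm
      · rintro ⟨t, ht⟩
        rw [← parts_congr hPhi i, Phi_parts] at ht
        obtain ⟨j, -, hj⟩ := mem_image.1 ht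
        exact ⟨j, Subtype.ext hj⟩)

/-- The fibers of `Phi` are equivalent to tuples of labelings. -/
noncomputable def fiberEquiv :
    {f : {f : Fin n → M k c // Function.Surjective f} // Phi f = x}
      ≃ ∀ i, Fin (c i) ≃ {t // t ∈ (x.1.2 i).parts} where
  toFun f := EofF x f.1.1 f.1.2 (by rw [Subtype.coe_eta]; exact f.2)
  invFun E := ⟨⟨g x E, g_surj x E⟩, Phi_g x E⟩
  left_inv := by
    rintro ⟨⟨f, hf⟩, h⟩
    apply Subtype.ext
    apply Subtype.ext
    show g x _ = f
    funext a
    rcases hfa : f a with ⟨i, j⟩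
    have haf : a ∈ fiber f ⟨i, j⟩ := mem_fiber.2 hfa
    have hmemparts : fiber f ⟨i, j⟩ ∈ (x.1.2 i).parts := by
      rw [← parts_congr h i, Phi_parts]
      exact mem_image_of_mem _ (mem_univ j)
    have hAi : a ∈ x.1.1 i := (x.1.2 i).le hmemparts haf
    rw [g_eq x _ (col_eq x hAi) hAi]
    refine congrArg (Sigma.mk i) ?_
    rw [Equiv.symm_apply_eq]
    exact Subtype.ext (Finpartition.part_eq_of_mem _ hmemparts haf)
  right_inv := by
    intro E
    funext i
    apply Equiv.ext
    intro j
    apply Subtype.ext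
    exact fiber_g x E i j

/-! ### Counting: `#Surj = mixedPart * ∏ c i !` -/

theorem card_surj_eq (n k : ℕ) (c : Fin k → ℕ) :
    Nat.card {f : Fin n → M k c // Function.Surjective f}
      = Nat.card (Struct n k c) * ∏ i, (c i).factorial := by
  classical
  rw [Nat.card_congr (Equiv.sigmaFiberEquiv (Phi (n := n) (k := k) (c := c))).symm]
  haveI : Fintype (Struct n k c) := Fintype.ofFinite _
  haveI : ∀ y : Struct n k c,
      Fintype {f : {f : Fin n → M k c // Function.Surjective f} // Phi f = y} :=
    fun y => Fintype.ofFinite _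
  rw [Nat.card_eq_fintype_card, Fintype.card_sigma]
  have hfib : ∀ y : Struct n k c,
      Fintype.card {f : {f : Fin n → M k c // Function.Surjective f} // Phi f = y}
        = ∏ i, (c i).factorial := by
    intro y
    rw [← Nat.card_eq_fintype_card, Nat.card_congr (fiberEquiv y), Nat.card_pi]
    refine Finset.prod_congr rfl fun i _ => ?_
    have hcard : Fintype.card (Fin (c i)) = Fintype.card {t // t ∈ (y.1.2 i).parts} := by
      rw [Fintype.card_fin, Fintype.card_coe, y.2.2.2 i]
    rw [Nat.card_eq_fintype_card, Fintype.card_equiv (Fintype.equivOfCardEq hcard),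
      Fintype.card_fin]
  simp only [hfib]
  rw [Finset.sum_const, Finset.card_univ, smul_eq_mul, Nat.card_eq_fintype_card]

/-! ### Counting surjections by inclusion-exclusion -/

theorem card_surjections (α β : Type*) [Fintype α] [Fintype β] [DecidableEq α] [DecidableEq β] :
    (Nat.card {f : α → β // Function.Surjective f} : ℤ)
      = ∑ j ∈ Finset.range (Fintype.card β + 1),
          (-1) ^ j * (Fintype.card β).choose j *
            ((Fintype.card β - j : ℕ) : ℤ) ^ Fintype.card α := by
  classical
  set S : β → Finset (α → β) := fun b => univ.filter fun f => ∀ a, f a ≠ b with hS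
  have hmem_inf : ∀ (t : Finset β) (f : α → β), f ∈ t.inf S ↔ ∀ b ∈ t, ∀ a, f a ≠ b := by
    intro t
    induction t using Finset.cons_induction with
    | empty => simp
    | cons b t hb ih =>
      intro f
      rw [Finset.inf_cons, Finset.inf_eq_inter, Finset.mem_inter, ih f]
      simp [hS, forall_and]
  have hmem_inf' : ∀ (t : Finset β) (g : β → Finset (α → β)) (f : α → β),
      f ∈ t.inf g ↔ ∀ b ∈ t, f ∈ g b := by
    intro t g
    induction t using Finset.cons_induction with
    | empty => simp
    | cons b t hb ih =>
      intro f
      simp [Finset.inf_cons, ih f, forall_and]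
  have h1 : (univ : Finset β).inf (fun b => (S b)ᶜ)
      = univ.filter fun f => Function.Surjective f := by
    ext f
    rw [hmem_inf']
    simp only [mem_univ, true_implies, Finset.mem_compl, hS, mem_filter, true_and,
      not_forall, not_not]
    exact Iff.rfl
  have h2 : ∀ t : Finset β, (t.inf S).card = (Fintype.card β - t.card) ^ Fintype.card α := by
    intro t
    have : t.inf S = univ.filter fun f => ∀ a, f a ∈ tᶜ := by
      ext f
      rw [hmem_inf]
      simp only [mem_filter, mem_univ, true_and, Finset.mem_compl]
      exact ⟨fun h a hb => h _ hb a rfl, fun h b hb a hfa => h a (hfa ▸ hb)⟩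
    rw [this, ← Fintype.card_subtype]
    rw [Fintype.card_congr (Equiv.subtypePiEquivPi (p := fun (_ : α) b => b ∈ tᶜ))]
    rw [Fintype.card_pi]
    simp [Finset.card_compl]
  have key := Finset.inclusion_exclusion_card_inf_compl (univ : Finset β) S
  rw [h1] at key
  have hcard : Nat.card {f : α → β // Function.Surjective f}
      = (univ.filter fun f : α → β => Function.Surjective f).card := by
    rw [Nat.card_eq_fintype_card, Fintype.card_subtype]
  rw [hcard, key]
  have : ∀ t ∈ (univ : Finset β).powerset,
      ((-1 : ℤ)^ t.card * (t.inf S).card : ℤ)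
        = (fun j => (-1 : ℤ) ^ j * ((Fintype.card β - j : ℕ) : ℤ) ^ Fintype.card α) t.card := by
    intro t _
    rw [h2 t]
    push_cast
    ring
  rw [Finset.sum_congr rfl this, Finset.sum_powerset_apply_card
    (fun j => (-1 : ℤ) ^ j * ((Fintype.card β - j : ℕ) : ℤ) ^ Fintype.card α)]
  rw [Finset.card_univ]
  refine Finset.sum_congr rfl fun j _ => ?_
  rw [nsmul_eq_mul]
  push_cast
  ring

/-! ### The coefficient of `(exp - 1) ^ m` -/

theorem coeff_exp_sub_one_pow (m N : ℕ) :
    PowerSeries.coeff N ((PowerSeries.exp ℚ - 1) ^ m)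
      = (∑ j ∈ Finset.range (m + 1),
          (-1 : ℚ) ^ (m - j) * (m.choose j : ℚ) * (j : ℚ) ^ N) / N.factorial := by
  rw [sub_pow, map_sum]
  rw [Finset.sum_div]
  refine Finset.sum_congr rfl fun j hj => ?_
  rw [Finset.mem_range, Nat.lt_succ_iff] at hj
  rw [one_pow, PowerSeries.exp_pow_eq_rescale_exp, mul_one]
  have hterm : ((-1 : PowerSeries ℚ) ^ (j + m) * PowerSeries.rescale (j : ℚ) (PowerSeries.exp ℚ)
        * ((m.choose j : ℕ) : PowerSeries ℚ))
      = PowerSeries.C ((-1 : ℚ) ^ (j + m) * (m.choose j : ℚ))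
          * PowerSeries.rescale (j : ℚ) (PowerSeries.exp ℚ) := by
    have h1 : ((-1 : PowerSeries ℚ)) = PowerSeries.C (-1) := by simp
    have h2 : ((m.choose j : ℕ) : PowerSeries ℚ) = PowerSeries.C ((m.choose j : ℕ) : ℚ) := by
      simp
    rw [h1, h2, ← map_pow, mul_right_comm, ← map_mul]
  rw [hterm, PowerSeries.coeff_C_mul, PowerSeries.coeff_rescale, PowerSeries.coeff_exp]
  have hsign : (-1 : ℚ) ^ (j + m) = (-1 : ℚ) ^ (m - j) := by
    rw [show j + m = (m - j) + 2 * j by omega, pow_add, pow_mul]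
    simp
  rw [hsign]
  have halg : (algebraMap ℚ ℚ) ((1 : ℚ) / N.factorial) = (1 : ℚ) / N.factorial := by
    simp
  rw [halg]
  field_simp

end MixedPartAux

/-- The mixed partition number `{B brace C}` for ground set `{1, …, n}` and cell multiset with
`c i` cells of label `i`: the number of tuples `(π_1, …, π_k)` whose underlying sets are
pairwise disjoint with union `{1, …, n}`, where `π i` is a partition of its underlying set into
exactly `c i` nonempty blocks. -/
noncomputable def mixedPart (n k : ℕ) (c : Fin k → ℕ) : ℕ :=
  Nat.card {x : Σ A : Fin k → Finset (Fin n), ∀ i, Finpartition (A i) //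
    (∀ i j, i ≠ j → Disjoint (x.1 i) (x.1 j)) ∧
    Finset.univ.biUnion x.1 = Finset.univ ∧
    ∀ i, (x.2 i).parts.card = c i}

open MixedPartAux in
theorem mixedPart_egf (k : ℕ) (hk : 1 ≤ k) (c : Fin k → ℕ) :
    (PowerSeries.mk fun n => (mixedPart n k c : ℚ) / n.factorial) =
      PowerSeries.C (∏ i, ((c i).factorial : ℚ))⁻¹ *
        (PowerSeries.exp ℚ - 1) ^ (∑ i, c i) := by
  classical
  set m := ∑ i, c i with hm
  ext N
  rw [PowerSeries.coeff_mk, PowerSeries.coeff_C_mul, coeff_exp_sub_one_pow]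
  -- key arithmetic identity
  have hMcard : Fintype.card (M k c) = m := by
    simp [M, hm]
  have hkey : (mixedPart N k c : ℚ) * ∏ i, ((c i).factorial : ℚ)
      = ∑ j ∈ Finset.range (m + 1), (-1 : ℚ) ^ (m - j) * (m.choose j : ℚ) * (j : ℚ) ^ N := by
    have hA : mixedPart N k c * ∏ i, (c i).factorial
        = Nat.card {f : Fin N → M k c // Function.Surjective f} :=
      (card_surj_eq N k c).symm
    have hB := card_surjections (Fin N) (M k c)
    rw [Fintype.card_fin, hMcard] at hB
    have hreflect : ∑ j ∈ Finset.range (m + 1),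
        (-1 : ℤ) ^ j * (m.choose j : ℤ) * ((m - j : ℕ) : ℤ) ^ N
        = ∑ j ∈ Finset.range (m + 1),
            (-1 : ℤ) ^ (m - j) * (m.choose j : ℤ) * (j : ℤ) ^ N := by
      rw [← Finset.sum_range_reflect]
      refine Finset.sum_congr rfl fun j hj => ?_
      rw [Finset.mem_range, Nat.lt_succ_iff] at hj
      simp only [Nat.add_sub_cancel]
      rw [Nat.sub_sub_self hj, Nat.choose_symm hj]
    have hZ : ((mixedPart N k c * ∏ i, (c i).factorial : ℕ) : ℤ)
        = ∑ j ∈ Finset.range (m + 1), (-1 : ℤ) ^ (m - j) * (m.choose j : ℤ) * (j : ℤ) ^ N := by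
      rw [hA]
      rw [hB]
      exact hreflect
    calc (mixedPart N k c : ℚ) * ∏ i, ((c i).factorial : ℚ)
        = (((mixedPart N k c * ∏ i, (c i).factorial : ℕ) : ℤ) : ℚ) := by push_cast; ring
      _ = ((∑ j ∈ Finset.range (m + 1),
            (-1 : ℤ) ^ (m - j) * (m.choose j : ℤ) * (j : ℤ) ^ N : ℤ) : ℚ) := by rw [hZ]
      _ = ∑ j ∈ Finset.range (m + 1), (-1 : ℚ) ^ (m - j) * (m.choose j : ℚ) * (j : ℚ) ^ N := by
          push_cast
          ring
  have hprod : (∏ i, ((c i).factorial : ℚ)) ≠ 0 := by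
    refine Finset.prod_ne_zero_iff.2 fun i _ => ?_
    exact_mod_cast (c i).factorial_ne_zero
  have hfac : ((N.factorial : ℚ)) ≠ 0 := by exact_mod_cast N.factorial_ne_zero
  rw [← hkey]
  field_simp
end
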